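/- arXiv:1512.02423 — 5 statements merged into one kernel-verified Lean document; each statement's English description precedes it below -/
import Mathlib

section
/- (Van der Corput, higher order case) Let k ≥ 2 be an integer. There exists a constant C > 0 depending only on k (in particular independent of a and b) such that for every a < b, every Φ ∈ C^k on [a, b] satisfying |Φ^{(k)}(x)| ≥ 1 for all x ∈ [a, b], and every t > 0, one has |∫_a^b e^{itΦ(ξ)} dξ| ≤ C t^{−1/k}. -/
open MeasureTheory Real Set intervalIntegral

-- quantitative two-point bound from derivative lower bound
lemma vdc_two_point {a b lam : ℝ} {g g' : ℝ → ℝ} (hl : 0 < lam)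
    (hg : ContinuousOn g (Set.Icc a b))
    (hg' : ∀ x ∈ Set.Ioo a b, HasDerivAt g (g' x) x)
    (hsign : (∀ x ∈ Set.Icc a b, lam ≤ g' x) ∨ (∀ x ∈ Set.Icc a b, g' x ≤ -lam)) :
    ∀ x ∈ Set.Icc a b, ∀ y ∈ Set.Icc a b, lam * |x - y| ≤ |g x - g y| := by
  have hint : interior (Set.Icc a b) = Set.Ioo a b := interior_Icc
  have hdiff : DifferentiableOn ℝ g (interior (Set.Icc a b)) := by
    rw [hint]; intro x hx; exact (hg' x hx).differentiableAt.differentiableWithinAt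
  have hderiv : ∀ x ∈ interior (Set.Icc a b), deriv g x = g' x := by
    rw [hint]; intro x hx; exact (hg' x hx).deriv
  have key : ∀ x ∈ Set.Icc a b, ∀ y ∈ Set.Icc a b, x ≤ y → lam * (y - x) ≤ |g x - g y| := by
    intro x hx y hy hxy
    rcases hsign with hpos | hneg
    · have hb : ∀ z ∈ interior (Set.Icc a b), lam ≤ deriv g z := by
        intro z hz; rw [hderiv z hz]
        exact hpos z (interior_subset hz)
      have := (convex_Icc a b).mul_sub_le_image_sub_of_le_deriv hg hdiff hb x hx y hy hxy
      calc lam * (y - x) ≤ g y - g x := this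
        _ ≤ |g y - g x| := le_abs_self _
        _ = |g x - g y| := abs_sub_comm _ _
    · have hb : ∀ z ∈ interior (Set.Icc a b), deriv g z ≤ -lam := by
        intro z hz; rw [hderiv z hz]
        exact hneg z (interior_subset hz)
      have := (convex_Icc a b).image_sub_le_mul_sub_of_deriv_le hg hdiff hb x hx y hy hxy
      calc lam * (y - x) = -(-lam * (y - x)) := by ring
        _ ≤ -(g y - g x) := by linarith
        _ = g x - g y := by ring
        _ ≤ |g x - g y| := le_abs_self _
  intro x hx y hy
  rcases le_total x y with h | h
  · rw [abs_of_nonpos (by linarith : x - y ≤ 0), neg_sub]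
    exact key x hx y hy h
  · rw [abs_of_nonneg (by linarith : (0:ℝ) ≤ x - y), abs_sub_comm]
    exact key y hy x hx h

-- iterated derivatives on a subinterval agree
lemma vdc_subset {a b a' b' : ℝ} {n : ℕ} {Φ : ℝ → ℝ} (N : ℕ)
    (hN : ContDiffOn ℝ N Φ (Set.Icc a b))
    (hsub : Set.Icc a' b' ⊆ Set.Icc a b) (hab : a < b) (hab' : a' < b')
    (hn : n ≤ N) :
    ∀ x ∈ Set.Icc a' b',
      iteratedDerivWithin n Φ (Set.Icc a' b') x = iteratedDerivWithin n Φ (Set.Icc a b) x := by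
  induction n with
  | zero => intro x hx; simp
  | succ m ih =>
    intro x hx
    have hm : m ≤ N := le_trans (Nat.le_succ m) hn
    have hud : UniqueDiffOn ℝ (Set.Icc a b) := uniqueDiffOn_Icc hab
    have hud' : UniqueDiffOn ℝ (Set.Icc a' b') := uniqueDiffOn_Icc hab'
    rw [iteratedDerivWithin_succ, iteratedDerivWithin_succ]
    have step1 : derivWithin (iteratedDerivWithin m Φ (Set.Icc a' b')) (Set.Icc a' b') x
        = derivWithin (iteratedDerivWithin m Φ (Set.Icc a b)) (Set.Icc a' b') x :=
      derivWithin_congr (ih hm) (ih hm x hx)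
    rw [step1]
    have hdiff : DifferentiableWithinAt ℝ (iteratedDerivWithin m Φ (Set.Icc a b)) (Set.Icc a b) x := by
      apply (hN.differentiableOn_iteratedDerivWithin ?_ hud) x (hsub hx)
      exact_mod_cast lt_of_lt_of_le (Nat.lt_succ_self m) hn
    have h1 := hdiff.hasDerivWithinAt
    have h2 := h1.mono hsub
    rw [h2.derivWithin (hud' x hx)]

lemma vdc_norm_exp (r : ℝ) : ‖Complex.exp (Complex.I * (r : ℂ))‖ = 1 := by
  rw [Complex.norm_exp]
  simp


lemma vdc_sign {a b lam : ℝ} {f : ℝ → ℝ} (hl : 0 < lam)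
    (hf : ContinuousOn f (Set.Icc a b)) (hlam : ∀ x ∈ Set.Icc a b, lam ≤ |f x|)
    (hab : a ≤ b) :
    (∀ x ∈ Set.Icc a b, lam ≤ f x) ∨ (∀ x ∈ Set.Icc a b, f x ≤ -lam) := by
  have ha : a ∈ Set.Icc a b := ⟨le_refl a, hab⟩
  have key : ∀ x ∈ Set.Icc a b, lam ≤ f x ∨ f x ≤ -lam := by
    intro x hx
    rcases le_abs.mp (hlam x hx) with h | h
    · exact Or.inl h
    · exact Or.inr (by linarith)
  have noz : ∀ x ∈ Set.Icc a b, f x ≠ 0 := by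
    intro x hx h0
    have := hlam x hx; rw [h0] at this; simp at this; linarith
  rcases key a ha with hpos | hneg
  · left
    intro x hx
    rcases key x hx with h | h
    · exact h
    · exfalso
      have hsub : Set.uIcc x a ⊆ Set.Icc a b := Set.uIcc_subset_Icc hx ha
      have := intermediate_value_uIcc (hf.mono hsub)
      have h0 : (0:ℝ) ∈ Set.uIcc (f x) (f a) := by
        rw [Set.mem_uIcc]; left; constructor <;> linarith
      obtain ⟨z, hz, hz0⟩ := this h0
      exact noz z (hsub hz) hz0
  · right
    intro x hx
    rcases key x hx with h | h
    · exfalso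
      have hsub : Set.uIcc a x ⊆ Set.Icc a b := Set.uIcc_subset_Icc ha hx
      have := intermediate_value_uIcc (hf.mono hsub)
      have h0 : (0:ℝ) ∈ Set.uIcc (f a) (f x) := by
        rw [Set.mem_uIcc]; left; constructor <;> linarith
      obtain ⟨z, hz, hz0⟩ := this h0
      exact noz z (hsub hz) hz0
    · exact h

lemma vdc_base_ibp {a b δ t : ℝ} (hab : a < b) (hδ : 0 < δ) (ht : 0 < t) {Φ : ℝ → ℝ}
    (hΦ : ContDiffOn ℝ 2 Φ (Set.Icc a b))
    (hD1 : ∀ x ∈ Set.Icc a b, δ ≤ |iteratedDerivWithin 1 Φ (Set.Icc a b) x|)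
    (hD2sign : (∀ x ∈ Set.Icc a b, 0 ≤ iteratedDerivWithin 2 Φ (Set.Icc a b) x) ∨
               (∀ x ∈ Set.Icc a b, iteratedDerivWithin 2 Φ (Set.Icc a b) x ≤ 0)) :
    ‖∫ ξ in a..b, Complex.exp (Complex.I * ((t * Φ ξ : ℝ) : ℂ))‖ ≤ 3 / (t * δ) := by
  have hud : UniqueDiffOn ℝ (Set.Icc a b) := uniqueDiffOn_Icc hab
  set D1 := iteratedDerivWithin 1 Φ (Set.Icc a b) with hD1def
  set D2 := iteratedDerivWithin 2 Φ (Set.Icc a b) with hD2def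
  have hΦc : ContinuousOn Φ (Set.Icc a b) := hΦ.continuousOn
  have hD1c : ContinuousOn D1 (Set.Icc a b) :=
    hΦ.continuousOn_iteratedDerivWithin (by norm_num) hud
  have hD2c : ContinuousOn D2 (Set.Icc a b) :=
    hΦ.continuousOn_iteratedDerivWithin (by norm_num) hud
  have hD1ne : ∀ x ∈ Set.Icc a b, D1 x ≠ 0 := by
    intro x hx h0
    have := hD1 x hx; rw [h0] at this; simp at this; linarith
  -- derivative facts at interior points
  have hΦ' : ∀ x ∈ Set.Ioo a b, HasDerivAt Φ (D1 x) x := by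
    intro x hx
    have hx' : x ∈ Set.Icc a b := Set.Ioo_subset_Icc_self hx
    have hdiff : DifferentiableWithinAt ℝ Φ (Set.Icc a b) x :=
      (hΦ.differentiableOn (by norm_num)) x hx'
    have h1 := hdiff.hasDerivWithinAt.hasDerivAt (Icc_mem_nhds hx.1 hx.2)
    rwa [show derivWithin Φ (Set.Icc a b) x = D1 x from
      (congrFun iteratedDerivWithin_one x).symm] at h1
  have hD1' : ∀ x ∈ Set.Ioo a b, HasDerivAt D1 (D2 x) x := by
    intro x hx
    have hx' : x ∈ Set.Icc a b := Set.Ioo_subset_Icc_self hx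
    have hdiff : DifferentiableWithinAt ℝ D1 (Set.Icc a b) x :=
      (hΦ.differentiableOn_iteratedDerivWithin (by norm_num) hud) x hx'
    have h1 := hdiff.hasDerivWithinAt.hasDerivAt (Icc_mem_nhds hx.1 hx.2)
    rwa [show derivWithin D1 (Set.Icc a b) x = D2 x from
      (congrFun (iteratedDerivWithin_succ (n := 1)) x).symm] at h1
  set E : ℝ → ℂ := fun ξ => Complex.exp (Complex.I * ((t * Φ ξ : ℝ) : ℂ)) with hEdef
  set w : ℝ → ℝ := fun ξ => D2 ξ / (D1 ξ) ^ 2 with hwdef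
  set F : ℝ → ℂ := fun ξ => E ξ / (Complex.I * t * (D1 ξ : ℂ)) with hFdef
  set G : ℝ → ℂ := fun ξ => E ξ * Complex.I * ((w ξ / t : ℝ) : ℂ) with hGdef
  -- continuity facts
  have hEc : ContinuousOn E (Set.Icc a b) := by
    apply Complex.continuous_exp.comp_continuousOn
    exact continuousOn_const.mul (Complex.continuous_ofReal.comp_continuousOn
      (continuousOn_const.mul hΦc))
  have hwc : ContinuousOn w (Set.Icc a b) := by
    apply hD2c.div (hD1c.pow 2)
    intro x hx
    exact pow_ne_zero 2 (hD1ne x hx)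
  have hGc : ContinuousOn G (Set.Icc a b) := by
    apply ContinuousOn.mul (hEc.mul continuousOn_const)
    exact Complex.continuous_ofReal.comp_continuousOn (hwc.div_const t)
  have hFc : ContinuousOn F (Set.Icc a b) := by
    apply hEc.div (continuousOn_const.mul
      (Complex.continuous_ofReal.comp_continuousOn hD1c))
    intro x hx
    simp only [Pi.mul_apply, mul_ne_zero_iff]
    refine ⟨⟨Complex.I_ne_zero, ?_⟩, ?_⟩
    · exact_mod_cast ne_of_gt ht
    · simp only [Function.comp_apply, ne_eq, Complex.ofReal_eq_zero]
      exact hD1ne x hx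
  -- the derivative of F
  have hF' : ∀ x ∈ Set.Ioo a b, HasDerivAt F (E x + G x) x := by
    intro x hx
    have hx' : x ∈ Set.Icc a b := Set.Ioo_subset_Icc_self hx
    have hE' : HasDerivAt E (Complex.I * t * (D1 x) * E x) x := by
      have hinner : HasDerivAt (fun ξ => ((t * Φ ξ : ℝ) : ℂ)) ((t * D1 x : ℝ) : ℂ) x :=
        ((hΦ' x hx).const_mul t).ofReal_comp
      have h2 : HasDerivAt (fun ξ => Complex.I * ((t * Φ ξ : ℝ) : ℂ))
          (Complex.I * ((t * D1 x : ℝ) : ℂ)) x := hinner.const_mul Complex.I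
      have h3 := h2.cexp
      convert h3 using 1
      simp only [hEdef]
      push_cast
      ring
    have hden : HasDerivAt (fun ξ => Complex.I * t * ((D1 ξ : ℝ) : ℂ))
        (Complex.I * t * ((D2 x : ℝ) : ℂ)) x := by
      have := (hD1' x hx).ofReal_comp
      exact this.const_mul (Complex.I * t)
    have hne : Complex.I * t * ((D1 x : ℝ) : ℂ) ≠ 0 := by
      simp only [mul_ne_zero_iff]
      refine ⟨⟨Complex.I_ne_zero, ?_⟩, ?_⟩
      · exact_mod_cast ne_of_gt ht
      · exact_mod_cast hD1ne x hx'
    have hquot := hE'.div hden hne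
    convert hquot using 1
    · rfl
    · rfl
    have htne : (t : ℂ) ≠ 0 := by exact_mod_cast ne_of_gt ht
    have hD1xne : ((D1 x : ℝ) : ℂ) ≠ 0 := by exact_mod_cast hD1ne x hx'
    simp only [hGdef, hwdef]
    push_cast
    field_simp
    ring_nf
    rw [Complex.I_sq]
    ring
  -- integrability
  have hEi : IntervalIntegrable E volume a b :=
    (hEc.mono (by rw [Set.uIcc_of_le hab.le])).intervalIntegrable
  have hGi : IntervalIntegrable G volume a b :=
    (hGc.mono (by rw [Set.uIcc_of_le hab.le])).intervalIntegrable
  have hEGi : IntervalIntegrable (fun ξ => E ξ + G ξ) volume a b := hEi.add hGi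
  -- FTC for F
  have hftc : ∫ ξ in a..b, (E ξ + G ξ) = F b - F a := by
    apply intervalIntegral.integral_eq_sub_of_hasDeriv_right_of_le hab.le hFc
    · intro x hx
      exact (hF' x hx).hasDerivWithinAt
    · exact hEGi
  have hsplit : ∫ ξ in a..b, E ξ = F b - F a - ∫ ξ in a..b, G ξ := by
    rw [← hftc, intervalIntegral.integral_add hEi hGi]
    ring
  -- bound on ∫ w and ∫ |w|
  have hW : ∫ ξ in a..b, w ξ = (D1 a)⁻¹ - (D1 b)⁻¹ := by
    have hwi : IntervalIntegrable w volume a b :=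
      (hwc.mono (by rw [Set.uIcc_of_le hab.le])).intervalIntegrable
    have hcont : ContinuousOn (fun ξ => -(D1 ξ)⁻¹) (Set.Icc a b) :=
      (hD1c.inv₀ hD1ne).neg
    have := intervalIntegral.integral_eq_sub_of_hasDeriv_right_of_le hab.le hcont
      (f' := w) ?_ hwi
    · rw [this]; ring
    · intro x hx
      have hx' : x ∈ Set.Icc a b := Set.Ioo_subset_Icc_self hx
      have h1 := ((hD1' x hx).inv (hD1ne x hx')).neg
      have : -(-(D2 x) / D1 x ^ 2) = w x := by simp [hwdef]; ring
      rw [this] at h1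
      exact h1.hasDerivWithinAt
  -- bound |W| ≤ δ⁻¹ via constant sign of D1
  have ha : a ∈ Set.Icc a b := ⟨le_refl a, hab.le⟩
  have hb : b ∈ Set.Icc a b := ⟨hab.le, le_refl b⟩
  have hinv : |(D1 a)⁻¹ - (D1 b)⁻¹| ≤ δ⁻¹ := by
    rcases vdc_sign hδ hD1c hD1 hab.le with hpos | hneg
    · have h1 : (D1 a)⁻¹ ≤ δ⁻¹ := inv_anti₀ hδ (hpos a ha)
      have h2 : (D1 b)⁻¹ ≤ δ⁻¹ := inv_anti₀ hδ (hpos b hb)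
      have h3 : 0 < (D1 a)⁻¹ := inv_pos.mpr (lt_of_lt_of_le hδ (hpos a ha))
      have h4 : 0 < (D1 b)⁻¹ := inv_pos.mpr (lt_of_lt_of_le hδ (hpos b hb))
      rw [abs_sub_le_iff]; constructor <;> linarith
    · have h1 : -(D1 a)⁻¹ ≤ δ⁻¹ := by
        have := inv_anti₀ hδ (show δ ≤ -(D1 a) by linarith [hneg a ha])
        rwa [← neg_inv] at this
      have h2 : -(D1 b)⁻¹ ≤ δ⁻¹ := by
        have := inv_anti₀ hδ (show δ ≤ -(D1 b) by linarith [hneg b hb])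
        rwa [← neg_inv] at this
      have h3 : (D1 a)⁻¹ < 0 := inv_lt_zero.mpr (by linarith [hneg a ha])
      have h4 : (D1 b)⁻¹ < 0 := inv_lt_zero.mpr (by linarith [hneg b hb])
      rw [abs_sub_le_iff]; constructor <;> linarith
  -- bound ∫ |w| ≤ δ⁻¹
  have hwabs : ∫ ξ in a..b, |w ξ| ≤ δ⁻¹ := by
    rcases hD2sign with hp | hn
    · have heq : Set.EqOn (fun ξ => |w ξ|) w (Set.uIcc a b) := by
        intro ξ hξ
        rw [Set.uIcc_of_le hab.le] at hξ
        have : 0 ≤ w ξ := div_nonneg (hp ξ hξ) (sq_nonneg _)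
        simp [abs_of_nonneg this]
      rw [intervalIntegral.integral_congr heq, hW]
      calc (D1 a)⁻¹ - (D1 b)⁻¹ ≤ |(D1 a)⁻¹ - (D1 b)⁻¹| := le_abs_self _
        _ ≤ δ⁻¹ := hinv
    · have heq : Set.EqOn (fun ξ => |w ξ|) (fun ξ => -w ξ) (Set.uIcc a b) := by
        intro ξ hξ
        rw [Set.uIcc_of_le hab.le] at hξ
        have : w ξ ≤ 0 := div_nonpos_of_nonpos_of_nonneg (hn ξ hξ) (sq_nonneg _)
        simp [abs_of_nonpos this]
      rw [intervalIntegral.integral_congr heq, intervalIntegral.integral_neg, hW]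
      calc -((D1 a)⁻¹ - (D1 b)⁻¹) ≤ |(D1 a)⁻¹ - (D1 b)⁻¹| := neg_le_abs _
        _ ≤ δ⁻¹ := hinv
  -- bound ‖∫ G‖
  have hGnorm : ‖∫ ξ in a..b, G ξ‖ ≤ 1 / (t * δ) := by
    have h1 : ‖∫ ξ in a..b, G ξ‖ ≤ ∫ ξ in a..b, ‖G ξ‖ :=
      intervalIntegral.norm_integral_le_integral_norm hab.le
    have heq : Set.EqOn (fun ξ => ‖G ξ‖) (fun ξ => |w ξ| / t) (Set.uIcc a b) := by
      intro ξ hξ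
      simp only [hGdef, norm_mul, Complex.norm_I, mul_one, Complex.norm_real,
        Real.norm_eq_abs, hEdef, vdc_norm_exp, one_mul, abs_div, abs_of_pos ht]
    have h2 : ∫ ξ in a..b, ‖G ξ‖ = (∫ ξ in a..b, |w ξ|) / t := by
      rw [intervalIntegral.integral_congr heq, intervalIntegral.integral_div]
    have h3 : (∫ ξ in a..b, |w ξ|) / t ≤ δ⁻¹ / t := by
      gcongr
    calc ‖∫ ξ in a..b, G ξ‖ ≤ (∫ ξ in a..b, |w ξ|) / t := by rw [← h2]; exact h1
      _ ≤ δ⁻¹ / t := h3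
      _ = 1 / (t * δ) := by field_simp
  -- bound ‖F x‖
  have hFnorm : ∀ x ∈ Set.Icc a b, ‖F x‖ ≤ 1 / (t * δ) := by
    intro x hx
    have h0 : ‖F x‖ = 1 / (t * |D1 x|) := by
      simp only [hFdef, norm_div, norm_mul, Complex.norm_I, one_mul, Complex.norm_real,
        Real.norm_eq_abs, hEdef, vdc_norm_exp, abs_of_pos ht]
    rw [h0]
    apply one_div_le_one_div_of_le (by positivity)
    exact mul_le_mul_of_nonneg_left (hD1 x hx) ht.le
  -- conclude
  rw [hsplit]
  have hfin : ‖F b - F a - ∫ ξ in a..b, G ξ‖ ≤ ‖F b‖ + ‖F a‖ + ‖∫ ξ in a..b, G ξ‖ := by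
    calc ‖F b - F a - ∫ ξ in a..b, G ξ‖ ≤ ‖F b - F a‖ + ‖∫ ξ in a..b, G ξ‖ := norm_sub_le _ _
      _ ≤ ‖F b‖ + ‖F a‖ + ‖∫ ξ in a..b, G ξ‖ := by linarith [norm_sub_le (F b) (F a)]
  have h3 : (3:ℝ) / (t * δ) = 1 / (t * δ) + 1 / (t * δ) + 1 / (t * δ) := by ring
  rw [h3]
  linarith [hFnorm b hb, hFnorm a ha, hGnorm, hfin]

lemma vdc_split {a b lam δ M : ℝ} {g : ℝ → ℝ} {E : ℝ → ℂ}
    (hab : a ≤ b) (hlam : 0 < lam) (hδ : 0 < δ) (hM : 0 ≤ M)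
    (hgc : ContinuousOn g (Set.Icc a b))
    (hEc : ContinuousOn E (Set.Icc a b))
    (hE1 : ∀ x, ‖E x‖ ≤ 1)
    (h2pt : ∀ x ∈ Set.Icc a b, ∀ y ∈ Set.Icc a b, lam * |x - y| ≤ |g x - g y|)
    (piece : ∀ a' b', a ≤ a' → a' ≤ b' → b' ≤ b → (∀ x ∈ Set.Icc a' b', δ ≤ |g x|) →
      ‖∫ ξ in a'..b', E ξ‖ ≤ M) :
    ‖∫ ξ in a..b, E ξ‖ ≤ 2 * M + 2 * δ / lam := by
  have hpos : 0 ≤ 2 * δ / lam := by positivity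
  set S : Set ℝ := {x | x ∈ Set.Icc a b ∧ |g x| < δ} with hSdef
  by_cases hS : S.Nonempty
  · have hbddB : BddBelow S := ⟨a, fun x hx => hx.1.1⟩
    have hbddA : BddAbove S := ⟨b, fun x hx => hx.1.2⟩
    set c := sInf S with hcdef
    set d := sSup S with hddef
    have hac : a ≤ c := le_csInf hS fun x hx => hx.1.1
    have hdb : d ≤ b := csSup_le hS fun x hx => hx.1.2
    have hcd : c ≤ d := csInf_le_csSup hS hbddB hbddA
    have hcb : c ≤ b := hcd.trans hdb
    have had : a ≤ d := hac.trans hcd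
    -- diameter bound
    have hdiam : ∀ x ∈ S, ∀ y ∈ S, x - y ≤ 2 * δ / lam := by
      intro x hx y hy
      have h1 := h2pt x hx.1 y hy.1
      have h2 : |g x - g y| ≤ |g x| + |g y| := abs_sub _ _
      have h3 : lam * |x - y| ≤ 2 * δ := by
        have := hx.2; have := hy.2; linarith
      have h4 : |x - y| ≤ 2 * δ / lam := by
        rw [le_div_iff₀ hlam]; linarith
      linarith [le_abs_self (x - y)]
    have hdc : d - c ≤ 2 * δ / lam := by
      have : d ≤ c + 2 * δ / lam := by
        apply csSup_le hS
        intro x hx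
        have : x - 2 * δ / lam ≤ c := by
          apply le_csInf hS
          intro y hy
          linarith [hdiam x hx y hy]
        linarith
      linarith
    -- lower bounds away from [c,d]
    have hleft : ∀ x ∈ Set.Icc a b, x < c → δ ≤ |g x| := by
      intro x hx hxc
      by_contra h
      push_neg at h
      exact absurd (csInf_le hbddB (⟨hx, h⟩ : x ∈ S)) (not_le.mpr hxc)
    have hright : ∀ x ∈ Set.Icc a b, d < x → δ ≤ |g x| := by
      intro x hx hdx
      by_contra h
      push_neg at h
      exact absurd (le_csSup hbddA (⟨hx, h⟩ : x ∈ S)) (not_le.mpr hdx)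
    have hcmem : c ∈ Set.Icc a b := ⟨hac, hcb⟩
    have hdmem : d ∈ Set.Icc a b := ⟨had, hdb⟩
    have hc_end : a < c → δ ≤ |g c| := by
      intro hac'
      have hne : (nhdsWithin c (Set.Ico a c)).NeBot := by
        apply mem_closure_iff_nhdsWithin_neBot.mp
        rw [closure_Ico (ne_of_lt hac')]
        exact ⟨hac'.le, le_refl c⟩
      have hsub : Set.Ico a c ⊆ Set.Icc a b := fun x hx => ⟨hx.1, hx.2.le.trans hcb⟩
      have htend : Filter.Tendsto (fun x => |g x|) (nhdsWithin c (Set.Ico a c)) (nhds |g c|) :=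
        ((hgc c hcmem).mono hsub).abs
      apply ge_of_tendsto htend
      filter_upwards [self_mem_nhdsWithin] with x hx
      exact hleft x (hsub hx) hx.2
    have hd_end : d < b → δ ≤ |g d| := by
      intro hdb'
      have hne : (nhdsWithin d (Set.Ioc d b)).NeBot := by
        apply mem_closure_iff_nhdsWithin_neBot.mp
        rw [closure_Ioc (ne_of_lt hdb')]
        exact ⟨le_refl d, hdb'.le⟩
      have hsub : Set.Ioc d b ⊆ Set.Icc a b := fun x hx => ⟨had.trans hx.1.le, hx.2⟩
      have htend : Filter.Tendsto (fun x => |g x|) (nhdsWithin d (Set.Ioc d b)) (nhds |g d|) :=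
        ((hgc d hdmem).mono hsub).abs
      apply ge_of_tendsto htend
      filter_upwards [self_mem_nhdsWithin] with x hx
      exact hright x (hsub hx) hx.1
    -- piece bounds
    have hIac : ‖∫ ξ in a..c, E ξ‖ ≤ M := by
      rcases eq_or_lt_of_le hac with heq | hlt
      · rw [← heq, intervalIntegral.integral_same]; simpa using hM
      · apply piece a c (le_refl a) hac hcb
        intro x hx
        rcases lt_or_eq_of_le hx.2 with h | h
        · exact hleft x ⟨hx.1, hx.2.trans hcb⟩ h
        · rw [h]; exact hc_end hlt
    have hIdb : ‖∫ ξ in d..b, E ξ‖ ≤ M := by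
      rcases eq_or_lt_of_le hdb with heq | hlt
      · rw [heq, intervalIntegral.integral_same]; simpa using hM
      · apply piece d b had hdb (le_refl b)
        intro x hx
        rcases lt_or_eq_of_le hx.1 with h | h
        · exact hright x ⟨had.trans hx.1, hx.2⟩ h
        · rw [← h]; exact hd_end hlt
    have hImid : ‖∫ ξ in c..d, E ξ‖ ≤ 2 * δ / lam := by
      have h1 : ‖∫ ξ in c..d, E ξ‖ ≤ 1 * |d - c| := by
        apply intervalIntegral.norm_integral_le_of_norm_le_const
        intro x _
        exact hE1 x
      rw [abs_of_nonneg (by linarith)] at h1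
      linarith
    -- integrability of E on pieces
    have hint : ∀ a' b', a ≤ a' → a' ≤ b' → b' ≤ b → IntervalIntegrable E volume a' b' := by
      intro a' b' h1 h2 h3
      apply ContinuousOn.intervalIntegrable
      apply hEc.mono
      rw [Set.uIcc_of_le h2]
      exact Set.Icc_subset_Icc h1 h3
    have hsum : ∫ ξ in a..b, E ξ =
        (∫ ξ in a..c, E ξ) + (∫ ξ in c..d, E ξ) + (∫ ξ in d..b, E ξ) := by
      rw [intervalIntegral.integral_add_adjacent_intervals
          (hint a c (le_refl a) hac hcb) (hint c d hac hcd hdb),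
        intervalIntegral.integral_add_adjacent_intervals
          (hint a d (le_refl a) had hdb) (hint d b had hdb (le_refl b))]
    rw [hsum]
    calc ‖(∫ ξ in a..c, E ξ) + (∫ ξ in c..d, E ξ) + (∫ ξ in d..b, E ξ)‖
        ≤ ‖(∫ ξ in a..c, E ξ) + (∫ ξ in c..d, E ξ)‖ + ‖∫ ξ in d..b, E ξ‖ := norm_add_le _ _
      _ ≤ ‖∫ ξ in a..c, E ξ‖ + ‖∫ ξ in c..d, E ξ‖ + ‖∫ ξ in d..b, E ξ‖ := by
          linarith [norm_add_le (∫ ξ in a..c, E ξ) (∫ ξ in c..d, E ξ)]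
      _ ≤ 2 * M + 2 * δ / lam := by linarith
  · -- S empty : |g| ≥ δ everywhere
    have hall : ∀ x ∈ Set.Icc a b, δ ≤ |g x| := by
      intro x hx
      by_contra h
      push_neg at h
      exact hS ⟨x, hx, h⟩
    have := piece a b (le_refl a) hab (le_refl b) hall
    linarith

lemma vdc_main : ∀ k : ℕ, 2 ≤ k → ∃ C : ℝ, 0 < C ∧ ∀ lam : ℝ, 0 < lam → ∀ a b : ℝ, a ≤ b →
    ∀ Φ : ℝ → ℝ, ContDiffOn ℝ k Φ (Set.Icc a b) →
    (∀ x ∈ Set.Icc a b, lam ≤ |iteratedDerivWithin k Φ (Set.Icc a b) x|) →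
    ∀ t : ℝ, 0 < t →
    ‖∫ ξ in a..b, Complex.exp (Complex.I * ((t * Φ ξ : ℝ) : ℂ))‖ ≤
      C * (t * lam) ^ (-(1:ℝ)/k) := by
  intro k hk
  induction k, hk using Nat.le_induction with
  | base =>
    refine ⟨8, by norm_num, ?_⟩
    intro lam hlam a b hab Φ hΦ hder t ht
    rcases eq_or_lt_of_le hab with heq | hab'
    · rw [heq, intervalIntegral.integral_same]
      simp only [norm_zero]
      positivity
    have hs : (0:ℝ) < t * lam := by positivity
    have hud : UniqueDiffOn ℝ (Set.Icc a b) := uniqueDiffOn_Icc hab'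
    set u := (t * lam) ^ (-(1:ℝ)/2) with hudef
    have hu : 0 < u := Real.rpow_pos_of_pos hs _
    set δ := lam * u with hδdef
    have hδ : 0 < δ := by positivity
    have htδ : t * δ = (t * lam) ^ ((1:ℝ)/2) := by
      have h1 : t * δ = (t * lam) * u := by rw [hδdef]; ring
      rw [h1, hudef]
      nth_rewrite 1 [← Real.rpow_one (t * lam)]
      rw [← Real.rpow_add hs]
      norm_num
    have hM : (0:ℝ) ≤ 3 / (t * δ) := by positivity
    set D1 := iteratedDerivWithin 1 Φ (Set.Icc a b) with hD1def
    set D2 := iteratedDerivWithin 2 Φ (Set.Icc a b) with hD2def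
    have hD1c : ContinuousOn D1 (Set.Icc a b) :=
      hΦ.continuousOn_iteratedDerivWithin (by norm_num) hud
    have hD2c : ContinuousOn D2 (Set.Icc a b) :=
      hΦ.continuousOn_iteratedDerivWithin (by norm_num) hud
    have hD1' : ∀ x ∈ Set.Ioo a b, HasDerivAt D1 (D2 x) x := by
      intro x hx
      have hx' : x ∈ Set.Icc a b := Set.Ioo_subset_Icc_self hx
      have hdiff : DifferentiableWithinAt ℝ D1 (Set.Icc a b) x :=
        (hΦ.differentiableOn_iteratedDerivWithin (by norm_num) hud) x hx'
      have h1 := hdiff.hasDerivWithinAt.hasDerivAt (Icc_mem_nhds hx.1 hx.2)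
      rwa [show derivWithin D1 (Set.Icc a b) x = D2 x from
        (congrFun (iteratedDerivWithin_succ (n := 1)) x).symm] at h1
    have hsign := vdc_sign hlam hD2c hder hab
    have h2pt := vdc_two_point hlam hD1c hD1' hsign
    have hEc : ContinuousOn (fun ξ => Complex.exp (Complex.I * ((t * Φ ξ : ℝ) : ℂ)))
        (Set.Icc a b) := by
      apply Complex.continuous_exp.comp_continuousOn
      exact continuousOn_const.mul (Complex.continuous_ofReal.comp_continuousOn
        (continuousOn_const.mul hΦ.continuousOn))
    have hsplit := vdc_split hab hlam hδ hM hD1c hEc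
      (fun x => le_of_eq (vdc_norm_exp _)) h2pt ?_
    · calc ‖∫ ξ in a..b, Complex.exp (Complex.I * ((t * Φ ξ : ℝ) : ℂ))‖
          ≤ 2 * (3 / (t * δ)) + 2 * δ / lam := hsplit
        _ = 8 * (t * lam) ^ (-(1:ℝ)/2) := by
            have h1 : 3 / (t * δ) = 3 * u := by
              rw [htδ, hudef, div_eq_mul_inv, ← Real.rpow_neg hs.le]
              norm_num
            have h2 : 2 * δ / lam = 2 * u := by
              rw [hδdef]; field_simp
            rw [h1, h2, hudef]
            ring
        _ = 8 * (t * lam) ^ (-(1:ℝ)/((2:ℕ):ℝ)) := by norm_num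
    · -- the piece estimate via vdc_base_ibp
      intro a' b' h1 h2 h3 hglow
      rcases eq_or_lt_of_le h2 with heq | hlt
      · rw [heq, intervalIntegral.integral_same]; simpa using hM
      have hsub : Set.Icc a' b' ⊆ Set.Icc a b := Set.Icc_subset_Icc h1 h3
      apply vdc_base_ibp hlt hδ ht (hΦ.mono hsub)
      · intro x hx
        rw [vdc_subset 2 hΦ hsub hab' hlt (by norm_num) x hx]
        exact hglow x hx
      · rcases hsign with hp | hn
        · left; intro x hx
          rw [vdc_subset 2 hΦ hsub hab' hlt (le_refl 2) x hx]
          linarith [hp x (hsub hx)]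
        · right; intro x hx
          rw [vdc_subset 2 hΦ hsub hab' hlt (le_refl 2) x hx]
          linarith [hn x (hsub hx)]
  | succ m hm IH =>
    obtain ⟨C, hC, hIH⟩ := IH
    refine ⟨2 * C + 2, by linarith, ?_⟩
    intro lam hlam a b hab Φ hΦ hder t ht
    rcases eq_or_lt_of_le hab with heq | hab'
    · rw [heq, intervalIntegral.integral_same]
      simp only [norm_zero]
      positivity
    have hs : (0:ℝ) < t * lam := by positivity
    have hud : UniqueDiffOn ℝ (Set.Icc a b) := uniqueDiffOn_Icc hab'
    have hmR : (0:ℝ) < (m:ℝ) := by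
      have : (0:ℕ) < m := by omega
      exact_mod_cast this
    have hm1R : (0:ℝ) < (m:ℝ) + 1 := by linarith
    set u := (t * lam) ^ (-(1:ℝ)/((m:ℝ)+1)) with hudef
    have hu : 0 < u := Real.rpow_pos_of_pos hs _
    set δ := lam * u with hδdef
    have hδ : 0 < δ := by positivity
    have htδ : t * δ = (t * lam) ^ ((m:ℝ)/((m:ℝ)+1)) := by
      have h1 : t * δ = (t * lam) * u := by rw [hδdef]; ring
      rw [h1, hudef]
      nth_rewrite 1 [← Real.rpow_one (t * lam)]
      rw [← Real.rpow_add hs]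
      congr 1
      field_simp
      ring
    have hMval : (t * δ) ^ (-(1:ℝ)/(m:ℝ)) = u := by
      rw [htδ, ← Real.rpow_mul hs.le, hudef]
      congr 1
      field_simp
    have hM : (0:ℝ) ≤ C * (t * δ) ^ (-(1:ℝ)/(m:ℝ)) := by positivity
    set g := iteratedDerivWithin m Φ (Set.Icc a b) with hgdef
    set Dk := iteratedDerivWithin (m+1) Φ (Set.Icc a b) with hDkdef
    have hgc : ContinuousOn g (Set.Icc a b) :=
      hΦ.continuousOn_iteratedDerivWithin (by exact_mod_cast Nat.le_succ m) hud
    have hDkc : ContinuousOn Dk (Set.Icc a b) :=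
      hΦ.continuousOn_iteratedDerivWithin (le_refl _) hud
    have hg' : ∀ x ∈ Set.Ioo a b, HasDerivAt g (Dk x) x := by
      intro x hx
      have hx' : x ∈ Set.Icc a b := Set.Ioo_subset_Icc_self hx
      have hdiff : DifferentiableWithinAt ℝ g (Set.Icc a b) x :=
        (hΦ.differentiableOn_iteratedDerivWithin (by exact_mod_cast Nat.lt_succ_self m) hud)
          x hx'
      have h1 := hdiff.hasDerivWithinAt.hasDerivAt (Icc_mem_nhds hx.1 hx.2)
      rwa [show derivWithin g (Set.Icc a b) x = Dk x from
        (congrFun (iteratedDerivWithin_succ (n := m)) x).symm] at h1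
    have hsign := vdc_sign hlam hDkc hder hab
    have h2pt := vdc_two_point hlam hgc hg' hsign
    have hEc : ContinuousOn (fun ξ => Complex.exp (Complex.I * ((t * Φ ξ : ℝ) : ℂ)))
        (Set.Icc a b) := by
      apply Complex.continuous_exp.comp_continuousOn
      exact continuousOn_const.mul (Complex.continuous_ofReal.comp_continuousOn
        (continuousOn_const.mul hΦ.continuousOn))
    have hsplit := vdc_split hab hlam hδ hM hgc hEc
      (fun x => le_of_eq (vdc_norm_exp _)) h2pt ?_
    · calc ‖∫ ξ in a..b, Complex.exp (Complex.I * ((t * Φ ξ : ℝ) : ℂ))‖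
          ≤ 2 * (C * (t * δ) ^ (-(1:ℝ)/(m:ℝ))) + 2 * δ / lam := hsplit
        _ = (2 * C + 2) * (t * lam) ^ (-(1:ℝ)/((m:ℕ)+1:ℕ)) := by
            have h2 : 2 * δ / lam = 2 * u := by
              rw [hδdef]; field_simp
            rw [hMval, h2, hudef]
            push_cast
            ring
    · intro a' b' h1 h2 h3 hglow
      rcases eq_or_lt_of_le h2 with heq | hlt
      · rw [heq, intervalIntegral.integral_same]; simpa using hM
      have hsub : Set.Icc a' b' ⊆ Set.Icc a b := Set.Icc_subset_Icc h1 h3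
      have hres : ContDiffOn ℝ m Φ (Set.Icc a' b') :=
        (hΦ.of_le (by exact_mod_cast Nat.le_succ m)).mono hsub
      have := hIH δ hδ a' b' h2 Φ hres ?_ t ht
      · calc ‖∫ ξ in a'..b', Complex.exp (Complex.I * ((t * Φ ξ : ℝ) : ℂ))‖
            ≤ C * (t * δ) ^ (-(1:ℝ)/(m:ℝ)) := this
          _ = C * (t * δ) ^ (-(1:ℝ)/(m:ℝ)) := rfl
      · intro x hx
        rw [vdc_subset (m+1) hΦ hsub hab' hlt (Nat.le_succ m) x hx]
        exact hglow x hx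

/-- Van der Corput's lemma, higher order case: if `|Φ^{(k)}| ≥ 1` on `[a,b]` with `k ≥ 2`,
then `|∫_a^b e^{itΦ}| ≤ C t^{-1/k}` with `C` depending only on `k`. -/
theorem van_der_corput_higher_order (k : ℕ) (hk : 2 ≤ k) :
    ∃ C > 0, ∀ a b : ℝ, a < b → ∀ Φ : ℝ → ℝ,
      ContDiffOn ℝ k Φ (Set.Icc a b) →
      (∀ x ∈ Set.Icc a b, 1 ≤ |iteratedDerivWithin k Φ (Set.Icc a b) x|) →
      ∀ t > 0,
        ‖∫ ξ in a..b, Complex.exp (Complex.I * ((t * Φ ξ : ℝ) : ℂ))‖ ≤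
          C * t ^ (-(1:ℝ) / k) := by
  obtain ⟨C, hC, h⟩ := vdc_main k hk
  refine ⟨C, hC, ?_⟩
  intro a b hab Φ hΦ hder t ht
  have := h 1 one_pos a b hab.le Φ hΦ (by simpa using hder) t ht
  simpa [mul_one] using this
end

section
/- (Van der Corput, first order case) There exists a universal constant C > 0 (independent of a and b) such that for every a < b, every Φ ∈ C¹ on [a, b] such that Φ' is monotone on [a, b] and |Φ'(x)| ≥ 1 for all x ∈ [a, b], and every t > 0, one has |∫_a^b e^{itΦ(ξ)} dξ| ≤ C / t. -/
open MeasureTheory Real Set intervalIntegral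

private lemma hdw_ofReal {f : ℝ → ℝ} {u x : ℝ} {s : Set ℝ} (hf : HasDerivWithinAt f u s x) :
    HasDerivWithinAt (fun y : ℝ => ((f y : ℝ) : ℂ)) (u : ℂ) s x := by
  exact hf.ofReal_comp

private lemma stieltjes_fubini (G : StieltjesFunction ℝ) {f : ℝ → ℂ} (hf : Continuous f)
    {C : ℝ} (hC : ∀ x, ‖f x‖ ≤ C) {a b : ℝ} (hab : a ≤ b) :
    ∫ x in a..b, (G x - G a) • f x
      = ∫ y in Ioc a b, (∫ x in y..b, f x) ∂G.measure := by
  set μ := G.measure with hμ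
  have hfinμ : μ (Ioc a b) < ⊤ := by
    rw [G.measure_Ioc]; exact ENNReal.ofReal_lt_top
  have hfinv : (volume : Measure ℝ) (Ioc a b) < ⊤ := by
    rw [Real.volume_Ioc]; exact ENNReal.ofReal_lt_top
  haveI : IsFiniteMeasure ((volume : Measure ℝ).restrict (Ioc a b)) :=
    ⟨by rwa [Measure.restrict_apply_univ]⟩
  haveI : IsFiniteMeasure (μ.restrict (Ioc a b)) :=
    ⟨by rwa [Measure.restrict_apply_univ]⟩
  set S : Set (ℝ × ℝ) := {p : ℝ × ℝ | a < p.2 ∧ p.2 ≤ p.1} with hS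
  have hSmeas : MeasurableSet S :=
    (measurableSet_lt measurable_const measurable_snd).inter
      (measurableSet_le measurable_snd measurable_fst)
  set g2 : ℝ → ℝ → ℂ := fun x y => S.indicator (fun p => f p.1) (x, y) with hg2
  have hint : Integrable (Function.uncurry g2)
      (((volume : Measure ℝ).restrict (Ioc a b)).prod (μ.restrict (Ioc a b))) := by
    have hmeas : AEStronglyMeasurable (Function.uncurry g2)
        (((volume : Measure ℝ).restrict (Ioc a b)).prod (μ.restrict (Ioc a b))) := by
      have : Function.uncurry g2 = S.indicator (fun p => f p.1) := rfl
      rw [this]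
      exact ((hf.comp continuous_fst).stronglyMeasurable.indicator hSmeas).aestronglyMeasurable
    refine Integrable.mono' (integrable_const (max C 0)) hmeas ?_
    refine Filter.Eventually.of_forall fun p => ?_
    have h1 : ‖Function.uncurry g2 p‖ ≤ ‖f p.1‖ := by
      show ‖S.indicator (fun p => f p.1) p‖ ≤ _
      exact norm_indicator_le_norm_self _ _
    exact h1.trans (le_max_of_le_left (hC _))
  have swap := integral_integral_swap hint
  have A : ∫ x in Ioc a b, (∫ y in Ioc a b, g2 x y ∂μ) = ∫ x in a..b, (G x - G a) • f x := by
    rw [intervalIntegral.integral_of_le hab]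
    refine setIntegral_congr_fun measurableSet_Ioc fun x hx => ?_
    have h1 : (fun y => g2 x y) = (Ioc a x).indicator (fun _ => f x) := by
      funext y
      simp only [hg2, Set.indicator_apply, hS, Set.mem_setOf_eq, Set.mem_Ioc]
    rw [h1, integral_indicator_const _ measurableSet_Ioc, measureReal_def,
      Measure.restrict_apply measurableSet_Ioc,
      Set.inter_eq_left.mpr (Set.Ioc_subset_Ioc_right hx.2), G.measure_Ioc,
      ENNReal.toReal_ofReal (sub_nonneg.mpr (G.mono hx.1.le))]
  have B : ∫ y in Ioc a b, (∫ x in Ioc a b, g2 x y) ∂μ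
      = ∫ y in Ioc a b, (∫ x in y..b, f x) ∂μ := by
    refine setIntegral_congr_fun measurableSet_Ioc fun y hy => ?_
    have h1 : (fun x => g2 x y) = (Ici y).indicator f := by
      funext x
      simp only [hg2, Set.indicator_apply, hS, Set.mem_setOf_eq, Set.mem_Ici]
      by_cases h : y ≤ x
      · simp [h, hy.1]
      · simp [h]
    rw [h1, MeasureTheory.integral_indicator measurableSet_Ici, Measure.restrict_restrict measurableSet_Ici]
    have h2 : Ici y ∩ Ioc a b = Icc y b := by
      ext x
      simp only [Set.mem_inter_iff, Set.mem_Ici, Set.mem_Ioc, Set.mem_Icc]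
      exact ⟨fun h => ⟨h.1, h.2.2⟩, fun h => ⟨h.1, hy.1.trans_le h.1, h.2⟩⟩
    rw [h2, integral_Icc_eq_integral_Ioc, ← intervalIntegral.integral_of_le hy.2]
  rw [← A, ← B]
  exact swap

private lemma mono_bound {g : ℝ → ℝ} (hgm : Monotone g) (hgc : Continuous g)
    (hg1 : ∀ x, |g x| ≤ 1) {f : ℝ → ℂ} (hf : Continuous f) {C : ℝ} (hC : ∀ x, ‖f x‖ ≤ C)
    {a b : ℝ} (hab : a ≤ b) {M : ℝ} (hM : 0 ≤ M)
    (hint : ∀ y ∈ Icc a b, ‖∫ x in y..b, f x‖ ≤ M) :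
    ‖∫ x in a..b, g x • f x‖ ≤ 3 * M := by
  set G : StieltjesFunction ℝ := ⟨g, hgm, fun x => hgc.continuousAt.continuousWithinAt⟩ with hG
  have key := stieltjes_fubini G hf hC hab
  have hfin : G.measure (Ioc a b) < ⊤ := by rw [G.measure_Ioc]; exact ENNReal.ofReal_lt_top
  have split : ∫ x in a..b, g x • f x
      = (∫ x in a..b, (g x - g a) • f x) + g a • ∫ x in a..b, f x := by
    rw [← intervalIntegral.integral_smul, ← intervalIntegral.integral_add]
    · congr 1; funext x; rw [← add_smul]; ring_nf
    · exact (((hgc.sub continuous_const).smul hf)).intervalIntegrable a b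
    · exact (continuous_const.smul hf).intervalIntegrable a b
  have bound1 : ‖∫ x in a..b, (g x - g a) • f x‖ ≤ 2 * M := by
    rw [key]
    have h1 : ‖∫ y in Ioc a b, (∫ x in y..b, f x) ∂G.measure‖
        ≤ M * (G.measure (Ioc a b)).toReal := by
      refine norm_setIntegral_le_of_norm_le_const hfin fun y hy => ?_
      exact hint y ⟨hy.1.le, hy.2⟩
    have h2 : (G.measure (Ioc a b)).toReal ≤ 2 := by
      rw [G.measure_Ioc, ENNReal.toReal_ofReal_eq_iff.mpr (sub_nonneg.mpr (hgm hab))]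
      have := abs_le.mp (hg1 b); have := abs_le.mp (hg1 a); linarith [this.1]
    calc ‖_‖ ≤ M * (G.measure (Ioc a b)).toReal := h1
      _ ≤ M * 2 := by exact mul_le_mul_of_nonneg_left h2 hM
      _ = 2 * M := by ring
  have bound2 : ‖g a • ∫ x in a..b, f x‖ ≤ M := by
    rw [norm_smul]
    have : ‖g a‖ ≤ 1 := hg1 a
    calc ‖g a‖ * ‖∫ x in a..b, f x‖ ≤ 1 * M :=
        mul_le_mul this (hint a ⟨le_rfl, hab⟩) (norm_nonneg _) zero_le_one
      _ = M := one_mul M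
  calc ‖∫ x in a..b, g x • f x‖
      ≤ ‖∫ x in a..b, (g x - g a) • f x‖ + ‖g a • ∫ x in a..b, f x‖ := by
        rw [split]; exact norm_add_le _ _
    _ ≤ 2 * M + M := add_le_add bound1 bound2
    _ = 3 * M := by ring




/-- Van der Corput's lemma, first order case: if `Φ'` is monotone with `|Φ'| ≥ 1` on `[a,b]`,
then `|∫_a^b e^{itΦ}| ≤ C / t` with a universal constant `C`. -/
theorem van_der_corput_first_order :
    ∃ C > 0, ∀ a b : ℝ, a < b → ∀ Φ : ℝ → ℝ,
      ContDiffOn ℝ 1 Φ (Set.Icc a b) →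
      (MonotoneOn (derivWithin Φ (Set.Icc a b)) (Set.Icc a b) ∨
        AntitoneOn (derivWithin Φ (Set.Icc a b)) (Set.Icc a b)) →
      (∀ x ∈ Set.Icc a b, 1 ≤ |derivWithin Φ (Set.Icc a b) x|) →
      ∀ t > 0,
        ‖∫ ξ in a..b, Complex.exp (Complex.I * ((t * Φ ξ : ℝ) : ℂ))‖ ≤ C / t := by
  refine ⟨6, by norm_num, ?_⟩
  intro a b hab Φ hΦ hmono hge t ht
  have hab' : a ≤ b := hab.le
  set s : Set ℝ := Set.Icc a b with hs
  set φ : ℝ → ℝ := derivWithin Φ s with hφ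
  have hsU : UniqueDiffOn ℝ s := uniqueDiffOn_Icc hab
  have hφc : ContinuousOn φ s := hΦ.continuousOn_derivWithin hsU le_rfl
  have hφne : ∀ x ∈ s, φ x ≠ 0 := by
    intro x hx h
    have := hge x hx
    rw [h] at this
    norm_num at this
  -- the derivative has a constant sign
  have hsign : (∀ x ∈ s, 1 ≤ φ x) ∨ (∀ x ∈ s, φ x ≤ -1) := by
    by_contra hcon
    push_neg at hcon
    obtain ⟨⟨x₀, hx₀, h0⟩, ⟨x₁, hx₁, h1⟩⟩ := hcon
    have h0' : φ x₀ ≤ -1 := by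
      rcases le_abs.mp (hge x₀ hx₀) with h | h
      · linarith
      · linarith
    have h1' : 1 ≤ φ x₁ := by
      rcases le_abs.mp (hge x₁ hx₁) with h | h
      · linarith
      · linarith
    have hsub : uIcc x₀ x₁ ⊆ s := Set.ordConnected_Icc.uIcc_subset hx₀ hx₁
    have hIVT := intermediate_value_uIcc (hφc.mono hsub)
    have h0m : (0 : ℝ) ∈ uIcc (φ x₀) (φ x₁) :=
      Set.mem_uIcc.mpr (Or.inl ⟨by linarith, by linarith⟩)
    obtain ⟨c, hc, hc0⟩ := hIVT h0m
    exact hφne c (hsub hc) hc0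
  have ht0 : (t : ℝ) ≠ 0 := ne_of_gt ht
  have hIt : (Complex.I * (t : ℂ)) ≠ 0 :=
    mul_ne_zero Complex.I_ne_zero (Complex.ofReal_ne_zero.mpr ht0)
  set E : ℝ → ℂ := fun ξ => Complex.exp (Complex.I * ((t * Φ ξ : ℝ) : ℂ)) with hE
  set h : ℝ → ℂ := fun ξ => (Complex.I * (t : ℂ))⁻¹ * E ξ with hh
  set f0 : ℝ → ℂ :=
    fun ξ => (Complex.I * (t : ℂ))⁻¹ * (E ξ * (Complex.I * ((t * φ ξ : ℝ) : ℂ))) with hf0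
  have hΦc : ContinuousOn Φ s := hΦ.continuousOn
  have hEc : ContinuousOn E s :=
    Complex.continuous_exp.comp_continuousOn
      (continuousOn_const.mul (Complex.continuous_ofReal.comp_continuousOn
        (continuousOn_const.mul hΦc)))
  have hf0c : ContinuousOn f0 s :=
    continuousOn_const.mul (hEc.mul (continuousOn_const.mul
      (Complex.continuous_ofReal.comp_continuousOn (continuousOn_const.mul hφc))))
  have hhc : ContinuousOn h s := continuousOn_const.mul hEc
  have hderiv : ∀ ξ ∈ s, HasDerivWithinAt h (f0 ξ) s ξ := by
    intro ξ hξ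
    have h1 : HasDerivWithinAt Φ (φ ξ) s ξ :=
      ((hΦ.differentiableOn one_ne_zero) ξ hξ).hasDerivWithinAt
    have h2 : HasDerivWithinAt (fun y => t * Φ y) (t * φ ξ) s ξ := h1.const_mul t
    have h3 := hdw_ofReal h2
    have h4 := h3.const_mul Complex.I
    have h5 := h4.cexp
    exact h5.const_mul ((Complex.I * (t : ℂ))⁻¹)
  have hFTC : ∀ y ∈ s, ∫ x in y..b, f0 x = h b - h y := by
    intro y hy
    refine intervalIntegral.integral_eq_sub_of_hasDeriv_right_of_le hy.2
      (hhc.mono (Icc_subset_Icc hy.1 le_rfl)) ?_ ?_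
    · intro x hx
      have hxs : x ∈ s := ⟨hy.1.trans hx.1.le, hx.2.le⟩
      have hx2 : Icc a b ∈ nhds x := Icc_mem_nhds (lt_of_le_of_lt hy.1 hx.1) hx.2
      exact ((hderiv x hxs).hasDerivAt hx2).hasDerivWithinAt
    · exact (hf0c.mono (by rw [uIcc_of_le hy.2]; exact Icc_subset_Icc hy.1 le_rfl)).intervalIntegrable
  have hnE : ∀ ξ, ‖E ξ‖ = 1 := by
    intro ξ
    rw [hE]
    simp [Complex.norm_exp, Complex.mul_re]
  have hnh : ∀ ξ, ‖h ξ‖ = 1 / t := by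
    intro ξ
    rw [hh]
    simp only [norm_mul, hnE, mul_one, norm_inv]
    simp [map_mul, Complex.norm_I, Complex.norm_real, abs_of_pos ht,
      one_div]
  -- extensions to all of ℝ
  set P : ℝ → ℝ := fun x => (Set.projIcc a b hab' x : ℝ) with hP
  have hPmem : ∀ x, P x ∈ s := fun x => (Set.projIcc a b hab' x).2
  have hPid : ∀ x ∈ s, P x = x := by
    intro x hx
    rw [hP]
    simp [Set.projIcc_of_mem hab' hx]
  have hPc : Continuous P := continuous_subtype_val.comp continuous_projIcc
  have hPmono : Monotone P := fun x y hxy => Subtype.coe_le_coe.mpr (monotone_projIcc hab' hxy)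
  set f : ℝ → ℂ := fun x => f0 (P x) with hf
  set g : ℝ → ℝ := fun x => 1 / φ (P x) with hg
  have hfc : Continuous f := hf0c.comp_continuous hPc hPmem
  have hgc : Continuous g :=
    continuous_const.div (hφc.comp_continuous hPc hPmem) fun x => hφne _ (hPmem x)
  have hg1 : ∀ x, |g x| ≤ 1 := by
    intro x
    have h1 := hge _ (hPmem x)
    rw [hg]
    simp only [abs_div, abs_one]
    rw [div_le_one (lt_of_lt_of_le one_pos h1)]
    exact h1
  obtain ⟨C, hC⟩ := isCompact_Icc.exists_bound_of_continuousOn hf0c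
  have hCb : ∀ x, ‖f x‖ ≤ C := fun x => hC _ (hPmem x)
  have hfM : ∀ y ∈ Icc a b, ‖∫ x in y..b, f x‖ ≤ 2 / t := by
    intro y hy
    have heq : ∫ x in y..b, f x = ∫ x in y..b, f0 x := by
      refine intervalIntegral.integral_congr fun x hx => ?_
      rw [uIcc_of_le hy.2] at hx
      have : x ∈ s := Icc_subset_Icc hy.1 le_rfl hx
      rw [hf]
      simp only
      rw [hPid x this]
    rw [heq, hFTC y hy]
    calc ‖h b - h y‖ ≤ ‖h b‖ + ‖h y‖ := norm_sub_le _ _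
      _ = 1 / t + 1 / t := by rw [hnh, hnh]
      _ = 2 / t := by ring
  have hEq : ∀ ξ ∈ s, g ξ • f ξ = E ξ := by
    intro ξ hξ
    show (1 / φ (P ξ)) • f0 (P ξ) = E ξ
    rw [hPid ξ hξ, hf0]
    simp only
    have hne : (φ ξ : ℂ) ≠ 0 := Complex.ofReal_ne_zero.mpr (hφne ξ hξ)
    rw [Complex.real_smul]
    push_cast
    field_simp
    exact mul_div_cancel_left₀ _ (Complex.ofReal_ne_zero.mpr ht0)
  have hmain : ∫ ξ in a..b, E ξ = ∫ ξ in a..b, g ξ • f ξ := by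
    refine intervalIntegral.integral_congr fun ξ hξ => ?_
    rw [uIcc_of_le hab'] at hξ
    exact (hEq ξ hξ).symm
  have hcases : Monotone g ∨ Monotone fun x => -g x := by
    rcases hsign with hpos | hneg
    · rcases hmono with hm | hm
      · right
        intro x y hxy
        have hux := hPmem x; have huy := hPmem y
        have := hm hux huy (hPmono hxy)
        simp only [hg, neg_le_neg_iff]
        exact one_div_le_one_div_of_le (lt_of_lt_of_le one_pos (hpos _ hux)) this
      · left
        intro x y hxy
        have hux := hPmem x; have huy := hPmem y
        have := hm hux huy (hPmono hxy)
        exact one_div_le_one_div_of_le (lt_of_lt_of_le one_pos (hpos _ huy)) this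
    · rcases hmono with hm | hm
      · right
        intro x y hxy
        have hux := hPmem x; have huy := hPmem y
        have := hm hux huy (hPmono hxy)
        simp only [hg, neg_le_neg_iff]
        exact one_div_le_one_div_of_neg_of_le (lt_of_le_of_lt (hneg _ huy) (by norm_num)) this
      · left
        intro x y hxy
        have hux := hPmem x; have huy := hPmem y
        have := hm hux huy (hPmono hxy)
        exact one_div_le_one_div_of_neg_of_le (lt_of_le_of_lt (hneg _ hux) (by norm_num)) this
  have hMnn : (0 : ℝ) ≤ 2 / t := by positivity
  have hfinal : ‖∫ ξ in a..b, g ξ • f ξ‖ ≤ 3 * (2 / t) := by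
    rcases hcases with hgm | hgm
    · exact mono_bound hgm hgc hg1 hfc hCb hab' hMnn hfM
    · have hneg1 : ∀ x, |(fun x => -g x) x| ≤ 1 := fun x => by
        simp only [abs_neg]; exact hg1 x
      have hb := mono_bound hgm hgc.neg hneg1 hfc hCb hab' hMnn hfM
      have heqn : ∫ x in a..b, g x • f x = -∫ x in a..b, (-g x) • f x := by
        rw [← intervalIntegral.integral_neg]
        congr 1
        funext x
        rw [neg_smul, neg_neg]
      rw [heqn, norm_neg]
      exact hb
  rw [hmain]
  calc ‖∫ ξ in a..b, g ξ • f ξ‖ ≤ 3 * (2 / t) := hfinal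
    _ = 6 / t := by ring
end

section
/- (Lower bound for the second derivative of the phase at low frequencies) There exist constants y₀ > 0 and C > 0, independent of μ, such that for all μ > 0 and all ξ with 0 < ξ ≤ y₀/√μ, one has |ω_μ''(ξ)| ≥ C μ ξ, where ω_μ'' is the second derivative of ω_μ. -/
open MeasureTheory Real

/-- The dispersion relation `ω_μ(ξ) = √(|ξ| tanh(√μ |ξ|) / √μ)`. -/
noncomputable def omegaWW (μ ξ : ℝ) : ℝ :=
  Real.sqrt (|ξ| * Real.tanh (Real.sqrt μ * |ξ|) / Real.sqrt μ)

private lemma tanh_hasDerivAt' (x : ℝ) :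
    HasDerivAt Real.tanh (1 / Real.cosh x ^ 2) x := by
  have h := (Real.hasDerivAt_sinh x).div (Real.hasDerivAt_cosh x) (Real.cosh_pos x).ne'
  have hfun : Real.tanh = fun y => Real.sinh y / Real.cosh y :=
    funext fun y => Real.tanh_eq_sinh_div_cosh y
  rw [hfun]
  refine h.congr_deriv ?_
  have h1 := Real.cosh_sq_sub_sinh_sq x
  field_simp
  linarith

private lemma sinh_le_self_mul_cosh {x : ℝ} (hx : 0 ≤ x) :
    Real.sinh x ≤ x * Real.cosh x := by
  have hd : ∀ y : ℝ, HasDerivAt (fun z => z * Real.cosh z - Real.sinh z)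
      (y * Real.sinh y) y := by
    intro y
    have h := ((hasDerivAt_id y).mul (Real.hasDerivAt_cosh y)).sub (Real.hasDerivAt_sinh y)
    refine h.congr_deriv ?_
    simp only [id_eq]
    ring
  have hmono : MonotoneOn (fun z => z * Real.cosh z - Real.sinh z) (Set.Ici 0) := by
    apply monotoneOn_of_deriv_nonneg (convex_Ici 0)
    · exact ((continuous_id.mul Real.continuous_cosh).sub Real.continuous_sinh).continuousOn
    · intro y hy
      exact (hd y).differentiableAt.differentiableWithinAt
    · intro y hy
      rw [(hd y).deriv]
      rw [interior_Ici] at hy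
      have hy' : (0:ℝ) < y := hy
      exact mul_nonneg hy'.le (Real.sinh_nonneg_iff.mpr hy'.le)
  have h0 : (fun z => z * Real.cosh z - Real.sinh z) 0 ≤
      (fun z => z * Real.cosh z - Real.sinh z) x :=
    hmono Set.self_mem_Ici hx hx
  simp at h0
  linarith

private lemma cosh_le_two' {x : ℝ} (h0 : 0 ≤ x) (h1 : x ≤ 1) : Real.cosh x ≤ 2 := by
  rw [Real.cosh_eq]
  have h2 : Real.exp x ≤ Real.exp 1 := Real.exp_le_exp.mpr h1
  have h3 : Real.exp (-x) ≤ 1 := Real.exp_le_one_iff.mpr (by linarith)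
  have h4 := Real.exp_one_lt_d9
  norm_num at h4 ⊢
  linarith

private lemma uFun_hasDerivAt {a : ℝ} (ha : 0 < a) (y : ℝ) :
    HasDerivAt (fun z => (Real.tanh (a*z) + a*z / Real.cosh (a*z)^2)/a)
      (2*(Real.cosh (a*y) - a*y*Real.sinh (a*y))/Real.cosh (a*y)^3) y := by
  have hc := Real.cosh_pos (a*y)
  have hlin : HasDerivAt (fun z : ℝ => a*z) a y := by
    simpa using (hasDerivAt_id y).const_mul a
  have htanh : HasDerivAt (fun z => Real.tanh (a*z)) (1 / Real.cosh (a*y)^2 * a) y :=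
    (tanh_hasDerivAt' (a*y)).comp y hlin
  have hcosh : HasDerivAt (fun z => Real.cosh (a*z)) (Real.sinh (a*y) * a) y :=
    (Real.hasDerivAt_cosh (a*y)).comp y hlin
  have hden : HasDerivAt (fun z => Real.cosh (a*z)^2)
      ((2:ℕ) * Real.cosh (a*y)^(2-1) * (Real.sinh (a*y) * a)) y := hcosh.pow 2
  have hdiv : HasDerivAt (fun z => a*z / Real.cosh (a*z)^2)
      ((a * Real.cosh (a*y)^2 - a*y*((2:ℕ) * Real.cosh (a*y)^(2-1) * (Real.sinh (a*y) * a)))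
        / (Real.cosh (a*y)^2)^2) y :=
    hlin.div hden (by positivity)
  have h := (htanh.add hdiv).div_const a
  refine h.congr_deriv ?_
  field_simp
  ring

private lemma fFun_hasDerivAt {a : ℝ} (ha : 0 < a) (y : ℝ) :
    HasDerivAt (fun z => z * Real.tanh (a*z) / a)
      ((Real.tanh (a*y) + a*y / Real.cosh (a*y)^2)/a) y := by
  have hc := Real.cosh_pos (a*y)
  have hlin : HasDerivAt (fun z : ℝ => a*z) a y := by
    simpa using (hasDerivAt_id y).const_mul a
  have htanh : HasDerivAt (fun z => Real.tanh (a*z)) (1 / Real.cosh (a*y)^2 * a) y :=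
    (tanh_hasDerivAt' (a*y)).comp y hlin
  have h := ((hasDerivAt_id y).mul htanh).div_const a
  refine h.congr_deriv ?_
  simp only [id_eq]
  field_simp

private lemma F_pos {a y : ℝ} (ha : 0 < a) (hy : 0 < y) :
    0 < y * Real.tanh (a*y) / a := by
  have ht : 0 < Real.tanh (a*y) := by
    rw [Real.tanh_eq_sinh_div_cosh]
    exact div_pos (Real.sinh_pos_iff.mpr (mul_pos ha hy)) (Real.cosh_pos _)
  positivity

private lemma omega_hasDerivAt {a y : ℝ} (ha : 0 < a) (hy : 0 < y) :
    HasDerivAt (fun z => Real.sqrt (z * Real.tanh (a*z)/a))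
      (((Real.tanh (a*y) + a*y / Real.cosh (a*y)^2)/a)
        / (2*Real.sqrt (y * Real.tanh (a*y)/a))) y :=
  (fFun_hasDerivAt ha y).sqrt (F_pos ha hy).ne'

/-- The key algebraic estimate, with `c, s` standing for `cosh (a ξ), sinh (a ξ)` and
`r = √(ξ sinh/(cosh · a))`. -/
private lemma key_ineq {a ξ c s r u : ℝ} (ha : 0 < a) (hξ : 0 < ξ)
    (hcpos : 0 < c) (hspos : 0 < s) (hc2 : c ≤ 2)
    (hsx : a*ξ ≤ s) (hsxc : s ≤ (a*ξ)*c)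
    (hrpos : 0 < r) (hr2 : r^2 = ξ*s/(c*a))
    (hu : u = (s/c + a*ξ/c^2)/a) :
    1/16 * a^2 * ξ ≤
      |(2*(c - a*ξ*s)/c^3 * (2*r) - u * (2*(u/(2*r)))) / (2*r)^2| := by
  have hx : 0 < a*ξ := mul_pos ha hξ
  set x := a*ξ with hx_def
  set U' : ℝ := 2*(c - x*s)/c^3 with hU'_def
  set M : ℝ := u^2 - 2*r^2*U' with hM_def
  have hE : (U' * (2*r) - u * (2*(u/(2*r)))) / (2*r)^2 = -(M / (4*r^2*r)) := by
    rw [hM_def]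
    field_simp
    ring
  rw [hE, abs_neg]
  have hMval : M = ((s*c - x)^2 + 4*x^2*s^2)/(a^2*c^4) := by
    rw [hM_def, hr2, hu, hU'_def, hx_def]
    field_simp
    ring
  have hMnonneg : 0 ≤ M := by rw [hMval]; positivity
  rw [abs_of_nonneg (by positivity)]
  -- lower bound for M
  have hc4 : c^4 ≤ 16 := by
    have := pow_le_pow_left₀ hcpos.le hc2 4
    norm_num at this
    linarith
  have hMlb : x^4/(4*a^2) ≤ M := by
    rw [hMval]
    have hxx : x*x ≤ s*s := mul_le_mul hsx hsx hx.le hspos.le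
    have hden : a^2*c^4 ≤ 16*a^2 := by nlinarith [sq_nonneg a]
    calc x^4/(4*a^2) = 4*x^4/(16*a^2) := by ring
      _ ≤ 4*x^4/(a^2*c^4) :=
          div_le_div_of_nonneg_left (by positivity) (by positivity) hden
      _ ≤ ((s*c - x)^2 + 4*x^2*s^2)/(a^2*c^4) := by
          gcongr
          nlinarith [sq_nonneg (s*c - x)]
  -- upper bound for r
  have hrub : r ≤ x/a := by
    have h1 : r^2 ≤ (x/a)^2 := by
      rw [hr2, div_pow, div_le_div_iff₀ (by positivity) (by positivity)]
      have h2 := mul_le_mul_of_nonneg_left hsxc (show (0:ℝ) ≤ a*a*ξ by positivity)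
      rw [hx_def] at h2 ⊢
      nlinarith [h2]
    calc r = Real.sqrt (r^2) := (Real.sqrt_sq hrpos.le).symm
      _ ≤ Real.sqrt ((x/a)^2) := Real.sqrt_le_sqrt h1
      _ = x/a := Real.sqrt_sq (by positivity)
  have hrcube : 4*r^2*r ≤ 4*(x/a)^3 := by
    have h3 := pow_le_pow_left₀ hrpos.le hrub 3
    calc 4*r^2*r = 4*r^3 := by ring
      _ ≤ 4*(x/a)^3 := by linarith
  have hstep : (1:ℝ)/16 * a^2 * ξ = (x^4/(4*a^2)) / (4*(x/a)^3) := by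
    rw [hx_def]; field_simp; ring
  rw [hstep]
  calc (x^4/(4*a^2)) / (4*(x/a)^3) ≤ M / (4*(x/a)^3) := by gcongr
    _ ≤ M / (4*r^2*r) := div_le_div_of_nonneg_left hMnonneg (by positivity) hrcube

/-- Lower bound for the second derivative of the phase at low frequencies. -/
theorem second_deriv_phase_lower_bound_low_freq :
    ∃ y₀ > 0, ∃ C > 0, ∀ μ > 0, ∀ ξ : ℝ, 0 < ξ → ξ ≤ y₀ / Real.sqrt μ →
      C * μ * ξ ≤ |iteratedDeriv 2 (omegaWW μ) ξ| := by
  refine ⟨1, one_pos, 1/16, by norm_num, ?_⟩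
  intro μ hμ ξ hξ hle
  set a := Real.sqrt μ with ha_def
  have ha : 0 < a := Real.sqrt_pos.mpr hμ
  have hμa : μ = a^2 := (Real.sq_sqrt hμ.le).symm
  have hx : 0 < a*ξ := mul_pos ha hξ
  have hx1 : a*ξ ≤ 1 := by
    have h2 := mul_le_mul_of_nonneg_left hle ha.le
    rwa [mul_one_div, div_self ha.ne'] at h2
  set ω : ℝ → ℝ := fun z => Real.sqrt (z * Real.tanh (a*z)/a) with hω_def
  set G : ℝ → ℝ := fun y => ((Real.tanh (a*y) + a*y / Real.cosh (a*y)^2)/a)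
      / (2*Real.sqrt (y * Real.tanh (a*y)/a)) with hG_def
  have hEq : ∀ y : ℝ, 0 < y → omegaWW μ =ᶠ[nhds y] ω := by
    intro y hy
    filter_upwards [lt_mem_nhds hy] with z hz
    simp only [omegaWW, hω_def, abs_of_pos hz, ha_def]
  have hderiv1 : ∀ y : ℝ, 0 < y → deriv (omegaWW μ) y = G y := by
    intro y hy
    rw [(hEq y hy).deriv_eq]
    exact (omega_hasDerivAt ha hy).deriv
  have hEq2 : deriv (omegaWW μ) =ᶠ[nhds ξ] G := by
    filter_upwards [lt_mem_nhds hξ] with z hz using hderiv1 z hz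
  set c := Real.cosh (a*ξ) with hc_def
  set s := Real.sinh (a*ξ) with hs_def
  have hcpos : 0 < c := Real.cosh_pos _
  have hspos : 0 < s := Real.sinh_pos_iff.mpr hx
  set r := Real.sqrt (ξ * Real.tanh (a*ξ)/a) with hr_def
  have hFpos : 0 < ξ * Real.tanh (a*ξ)/a := F_pos ha hξ
  have hrpos : 0 < r := Real.sqrt_pos.mpr hFpos
  have hr2 : r^2 = ξ * s/(c*a) := by
    rw [hr_def, Real.sq_sqrt hFpos.le, Real.tanh_eq_sinh_div_cosh, ← hs_def, ← hc_def]
    field_simp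
    try ring
  set uξ : ℝ := (Real.tanh (a*ξ) + a*ξ / Real.cosh (a*ξ)^2)/a with hu_def
  have hGderiv : HasDerivAt G
      ((2*(c - a*ξ*s)/c^3 * (2*r) - uξ * (2*(uξ/(2*r)))) / (2*r)^2) ξ := by
    have hu := uFun_hasDerivAt ha ξ
    have hv : HasDerivAt (fun y => 2*Real.sqrt (y * Real.tanh (a*y)/a))
        (2*(uξ/(2*r))) ξ := (omega_hasDerivAt ha hξ).const_mul 2
    exact hu.div hv (by positivity)
  have hval : iteratedDeriv 2 (omegaWW μ) ξ
      = (2*(c - a*ξ*s)/c^3 * (2*r) - uξ * (2*(uξ/(2*r)))) / (2*r)^2 := by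
    rw [show (2:ℕ) = 1 + 1 from rfl, iteratedDeriv_succ, iteratedDeriv_one]
    rw [hEq2.deriv_eq]
    exact hGderiv.deriv
  rw [hval, hμa]
  have huval : uξ = (s/c + a*ξ/c^2)/a := by
    rw [hu_def, Real.tanh_eq_sinh_div_cosh, ← hs_def, ← hc_def]
  exact key_ineq ha hξ hcpos hspos (cosh_le_two' hx.le hx1)
    (Real.self_lt_sinh_iff.mpr hx).le (sinh_le_self_mul_cosh hx.le) hrpos hr2 huval
end

section
/- (Lower bound for the second derivative of the phase at high frequencies) There exist constants y₀ > 0 and C > 0, independent of μ, such that for all μ > 0 and all ξ ≥ y₀/√μ, one has |ω_μ''(ξ)| ≥ C μ^{−1/4} ξ^{−3/2}, where ω_μ'' is the second derivative of ω_μ. -/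
open MeasureTheory Real

lemma hasDerivAt_tanh (x : ℝ) : HasDerivAt Real.tanh (1 - Real.tanh x ^ 2) x := by
  have h := (Real.hasDerivAt_sinh x).div (Real.hasDerivAt_cosh x) (Real.cosh_pos x).ne'
  have e : (fun x => Real.sinh x / Real.cosh x) = Real.tanh := by
    funext t; rw [Real.tanh_eq_sinh_div_cosh]
  rw [show (Real.sinh / Real.cosh) = fun x => Real.sinh x / Real.cosh x from rfl, e] at h
  refine h.congr_deriv ?_
  rw [Real.tanh_eq_sinh_div_cosh]
  have hc : Real.cosh x ≠ 0 := (Real.cosh_pos x).ne'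
  field_simp

lemma tanh_pos {x : ℝ} (hx : 0 < x) : 0 < Real.tanh x := by
  rw [Real.tanh_eq_sinh_div_cosh]
  exact div_pos (Real.sinh_pos_iff.2 hx) (Real.cosh_pos x)

lemma tanh_lt_one' (x : ℝ) : Real.tanh x < 1 := by
  rw [Real.tanh_eq_sinh_div_cosh]
  rw [div_lt_one (Real.cosh_pos x)]
  exact Real.sinh_lt_cosh x

lemma half_le_tanh {x : ℝ} (hx : 2 ≤ x) : 1/2 ≤ Real.tanh x := by
  rw [Real.tanh_eq_sinh_div_cosh, le_div_iff₀ (Real.cosh_pos x)]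
  rw [Real.sinh_eq, Real.cosh_eq]
  have h1 : x + 1 ≤ Real.exp x := Real.add_one_le_exp x
  have h2 : Real.exp (-x) ≤ 1 := Real.exp_le_one_iff.2 (by linarith)
  nlinarith

noncomputable def Gww (y : ℝ) : ℝ := Real.sqrt (y * Real.tanh y)
noncomputable def Pww (y : ℝ) : ℝ := Real.tanh y + y * (1 - Real.tanh y ^ 2)
noncomputable def Gww1 (y : ℝ) : ℝ := Pww y / (2 * Gww y)
noncomputable def Qww (y : ℝ) : ℝ := 2 * (1 - Real.tanh y ^ 2) * (1 - y * Real.tanh y)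
noncomputable def Gww2 (y : ℝ) : ℝ :=
  (Qww y * (2 * Gww y) - Pww y * (2 * Gww1 y)) / (2 * Gww y) ^ 2

lemma h_pos {y : ℝ} (hy : 0 < y) : 0 < y * Real.tanh y := mul_pos hy (tanh_pos hy)

lemma Gww_pos {y : ℝ} (hy : 0 < y) : 0 < Gww y := Real.sqrt_pos.2 (h_pos hy)

lemma hasDerivAt_h (y : ℝ) : HasDerivAt (fun t => t * Real.tanh t) (Pww y) y := by
  have h := (hasDerivAt_id y).mul (hasDerivAt_tanh y)
  exact h.congr_deriv (by simp [Pww])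

lemma hasDerivAt_Gww {y : ℝ} (hy : 0 < y) : HasDerivAt Gww (Gww1 y) y := by
  have h := (hasDerivAt_h y).sqrt (h_pos hy).ne'
  exact h.congr_deriv (by simp [Gww1, Gww])

lemma hasDerivAt_Pww (y : ℝ) : HasDerivAt Pww (Qww y) y := by
  have h1 : HasDerivAt (fun t => Real.tanh t ^ 2)
      (2 * Real.tanh y ^ 1 * (1 - Real.tanh y ^ 2)) y := (hasDerivAt_tanh y).pow 2
  have h2 : HasDerivAt (fun t => 1 - Real.tanh t ^ 2)
      (-(2 * Real.tanh y ^ 1 * (1 - Real.tanh y ^ 2))) y := by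
    exact ((hasDerivAt_const y (1:ℝ)).sub h1).congr_deriv (by simp)
  have h3 := (hasDerivAt_id y).mul h2
  have h4 := (hasDerivAt_tanh y).add h3
  have h5 : HasDerivAt Pww (1 - Real.tanh y ^ 2 +
      (1 * (1 - Real.tanh y ^ 2) + y * -(2 * Real.tanh y ^ 1 * (1 - Real.tanh y ^ 2)))) y := h4
  convert h5 using 1
  simp only [Qww]; ring

lemma hasDerivAt_Gww1 {y : ℝ} (hy : 0 < y) : HasDerivAt Gww1 (Gww2 y) y := by
  have hd : HasDerivAt (fun t => 2 * Gww t) (2 * Gww1 y) y := (hasDerivAt_Gww hy).const_mul 2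
  have hne : 2 * Gww y ≠ 0 := (mul_pos two_pos (Gww_pos hy)).ne'
  exact (hasDerivAt_Pww y).div hd hne

lemma Gww2_eq {y : ℝ} (hy : 0 < y) :
    Gww2 y = (2 * Qww y * (y * Real.tanh y) - Pww y ^ 2) / (4 * (y * Real.tanh y) * Gww y) := by
  have hG : 0 < Gww y := Gww_pos hy
  have hsq : Gww y ^ 2 = y * Real.tanh y := Real.sq_sqrt (h_pos hy).le
  rw [Gww2, Gww1, ← hsq]
  field_simp
  ring

lemma Gww2_bound {y : ℝ} (hy : 2 ≤ y) : 1 / (16 * (y * Real.sqrt y)) ≤ |Gww2 y| := by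
  have hy0 : 0 < y := by linarith
  have ht1 : 1/2 ≤ Real.tanh y := half_le_tanh hy
  have ht2 : Real.tanh y < 1 := tanh_lt_one' y
  have hyt : 1 ≤ y * Real.tanh y := by nlinarith
  have hQ : Qww y ≤ 0 := by
    rw [Qww]
    apply mul_nonpos_of_nonneg_of_nonpos
    · nlinarith
    · linarith
  have hP : 1/2 ≤ Pww y := by
    rw [Pww]
    nlinarith
  have hN : 2 * Qww y * (y * Real.tanh y) - Pww y ^ 2 ≤ -(1/4) := by
    nlinarith [h_pos hy0]
  have hG : 0 < Gww y := Gww_pos hy0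
  have hGle : Gww y ≤ Real.sqrt y := by
    apply Real.sqrt_le_sqrt
    nlinarith
  have hsy : 0 < Real.sqrt y := Real.sqrt_pos.2 hy0
  have hden : 0 < 4 * (y * Real.tanh y) * Gww y := mul_pos (by nlinarith [h_pos hy0]) hG
  have hnum : 2 * Qww y * (y * Real.tanh y) - Pww y ^ 2 < 0 := by linarith
  rw [Gww2_eq hy0, abs_div, abs_of_pos hden, abs_of_neg hnum]
  rw [show (1:ℝ) / (16 * (y * Real.sqrt y)) = (1/4) / (4 * (y * Real.sqrt y)) by ring]
  apply div_le_div₀ (by linarith) (by linarith) (by positivity)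
  have h1 : y * Real.tanh y ≤ y := by nlinarith
  nlinarith [h_pos hy0]

lemma omega_eq {μ : ℝ} (hμ : 0 < μ) {x : ℝ} (hx : 0 < x) :
    omegaWW μ x = Gww (Real.sqrt μ * x) / Real.sqrt μ := by
  have hs : 0 < Real.sqrt μ := Real.sqrt_pos.2 hμ
  rw [omegaWW, Gww, abs_of_pos hx]
  have h1 : Real.sqrt μ * x * Real.tanh (Real.sqrt μ * x)
      = (Real.sqrt μ) ^ 2 * (x * Real.tanh (Real.sqrt μ * x) / Real.sqrt μ) := by
    field_simp
  rw [h1, Real.sqrt_mul (sq_nonneg _), Real.sqrt_sq hs.le]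
  rw [mul_div_assoc, mul_div_cancel_left₀ _ hs.ne']

lemma hasDerivAt_omega {μ x : ℝ} (hμ : 0 < μ) (hx : 0 < x) :
    HasDerivAt (omegaWW μ) (Gww1 (Real.sqrt μ * x)) x := by
  have hs : 0 < Real.sqrt μ := Real.sqrt_pos.2 hμ
  have hin : HasDerivAt (fun t : ℝ => Real.sqrt μ * t) (Real.sqrt μ) x := by
    simpa using (hasDerivAt_id x).const_mul (Real.sqrt μ)
  have h1 : HasDerivAt (fun t => Gww (Real.sqrt μ * t) / Real.sqrt μ)
      (Gww1 (Real.sqrt μ * x) * Real.sqrt μ / Real.sqrt μ) x :=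
    ((hasDerivAt_Gww (mul_pos hs hx)).comp x hin).div_const _
  rw [mul_div_assoc, div_self hs.ne', mul_one] at h1
  apply h1.congr_of_eventuallyEq
  filter_upwards [Ioi_mem_nhds hx] with t ht
  exact omega_eq hμ ht

/-- Lower bound for the second derivative of the phase at high frequencies. -/
theorem second_deriv_phase_lower_bound_high_freq :
    ∃ y₀ > 0, ∃ C > 0, ∀ μ > 0, ∀ ξ : ℝ, y₀ / Real.sqrt μ ≤ ξ →
      C * μ ^ (-(1:ℝ)/4) * ξ ^ (-(3:ℝ)/2) ≤ |iteratedDeriv 2 (omegaWW μ) ξ| := by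
  refine ⟨2, two_pos, 1/16, by norm_num, fun μ hμ ξ hξ => ?_⟩
  have hs : 0 < Real.sqrt μ := Real.sqrt_pos.2 hμ
  have hξ0 : 0 < ξ := lt_of_lt_of_le (by positivity) hξ
  have hy : 2 ≤ Real.sqrt μ * ξ := by
    rw [div_le_iff₀ hs] at hξ; linarith [hξ]
  have hy0 : 0 < Real.sqrt μ * ξ := mul_pos hs hξ0
  -- compute the second derivative
  have hev : deriv (omegaWW μ) =ᶠ[nhds ξ] fun x => Gww1 (Real.sqrt μ * x) := by
    filter_upwards [Ioi_mem_nhds hξ0] with x hx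
    exact (hasDerivAt_omega hμ hx).deriv
  have hin : HasDerivAt (fun t : ℝ => Real.sqrt μ * t) (Real.sqrt μ) ξ := by
    simpa using (hasDerivAt_id ξ).const_mul (Real.sqrt μ)
  have h2 : HasDerivAt (fun x => Gww1 (Real.sqrt μ * x))
      (Gww2 (Real.sqrt μ * ξ) * Real.sqrt μ) ξ := (hasDerivAt_Gww1 hy0).comp ξ hin
  have hiter : iteratedDeriv 2 (omegaWW μ) ξ = Gww2 (Real.sqrt μ * ξ) * Real.sqrt μ := by
    rw [iteratedDeriv_succ, iteratedDeriv_one, hev.deriv_eq, h2.deriv]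
  rw [hiter, abs_mul, abs_of_pos hs]
  -- the bound
  have hb := Gww2_bound hy
  have key : (1/16 : ℝ) * μ ^ (-(1:ℝ)/4) * ξ ^ (-(3:ℝ)/2)
      = 1 / (16 * (Real.sqrt μ * ξ * Real.sqrt (Real.sqrt μ * ξ))) * Real.sqrt μ := by
    have e1 : μ ^ (-(1:ℝ)/4) = (Real.sqrt (Real.sqrt μ))⁻¹ := by
      have h4 : Real.sqrt (Real.sqrt μ) = μ ^ ((1:ℝ)/4) := by
        rw [Real.sqrt_eq_rpow, Real.sqrt_eq_rpow, ← Real.rpow_mul hμ.le,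
          show (1:ℝ)/2*(1/2) = 1/4 by norm_num]
      rw [h4, ← Real.rpow_neg hμ.le]
      norm_num
    have e2 : ξ ^ (-(3:ℝ)/2) = (ξ * Real.sqrt ξ)⁻¹ := by
      rw [show -(3:ℝ)/2 = -(3/2) by norm_num, Real.rpow_neg hξ0.le,
        show (3:ℝ)/2 = 1 + 1/2 by norm_num, Real.rpow_add hξ0, Real.rpow_one,
        ← Real.sqrt_eq_rpow]
    rw [e1, e2, Real.sqrt_mul hs.le]
    have hss : 0 < Real.sqrt (Real.sqrt μ) := Real.sqrt_pos.2 hs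
    have hsξ : 0 < Real.sqrt ξ := Real.sqrt_pos.2 hξ0
    have : Real.sqrt μ = Real.sqrt (Real.sqrt μ) ^ 2 := (Real.sq_sqrt hs.le).symm
    rw [this]
    field_simp
  rw [key]
  exact mul_le_mul_of_nonneg_right hb hs.le
end

section
/- (Low-frequency oscillatory integral with cubic decay) There exist constants y₀ > 0 and C > 0, independent of μ, t and x, such that for all μ > 0, all t > 0 and all x ∈ ℝ, one has |∫_{|ξ| ≤ y₀/√μ} e^{i(tω_μ(ξ) + xξ)} dξ| ≤ C (μ t)^{−1/3}. -/
open MeasureTheory Real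

open MeasureTheory

namespace LowFreqAux
open Real intervalIntegral

lemma nonpos_of_deriv_nonpos (F G : ℝ → ℝ) (hF : ∀ x, HasDerivAt F (G x) x)
    (h0 : F 0 = 0) {y : ℝ} (hy : 0 ≤ y) (hG : ∀ x ∈ Set.Icc (0:ℝ) y, G x ≤ 0) :
    F y ≤ 0 := by
  have hanti : AntitoneOn F (Set.Icc 0 y) := by
    apply antitoneOn_of_deriv_nonpos (convex_Icc 0 y)
    · exact fun x _ => (hF x).continuousAt.continuousWithinAt
    · exact fun x hx => ((hF x).differentiableAt).differentiableWithinAt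
    · intro x hx
      rw [interior_Icc] at hx
      rw [(hF x).deriv]
      exact hG x ⟨hx.1.le, hx.2.le⟩
  have := hanti (Set.left_mem_Icc.2 hy) (Set.right_mem_Icc.2 hy) hy
  simpa [h0] using this

noncomputable def R0 (y : ℝ) : ℝ :=
  y * sinh (2*y) - 2*(y^2*(cosh (2*y) - 1)) - sinh (2*y) * sinh (2*y) / 4 - y^2 + 4*y^4
noncomputable def R1 (y : ℝ) : ℝ :=
  sinh (2*y) - 2*(y*cosh (2*y)) - 4*(y^2*sinh (2*y)) - sinh (4*y)/2 + 2*y + 16*y^3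
noncomputable def R2 (y : ℝ) : ℝ :=
  2 + 48*y^2 - 12*(y*sinh (2*y)) - 8*(y^2*cosh (2*y)) - 2*cosh (4*y)
noncomputable def R3 (y : ℝ) : ℝ :=
  96*y - 12*sinh (2*y) - 40*(y*cosh (2*y)) - 16*(y^2*sinh (2*y)) - 8*sinh (4*y)
noncomputable def R4 (y : ℝ) : ℝ :=
  96 - 64*cosh (2*y) - 112*(y*sinh (2*y)) - 32*(y^2*cosh (2*y)) - 32*cosh (4*y)
noncomputable def R5 (y : ℝ) : ℝ :=
  -(240*sinh (2*y)) - 288*(y*cosh (2*y)) - 64*(y^2*sinh (2*y)) - 128*sinh (4*y)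

lemma hd2 (y : ℝ) : HasDerivAt (fun y : ℝ => 2*y) 2 y := by
  simpa using (hasDerivAt_id' (𝕜 := ℝ) (x := y)).const_mul (2:ℝ)

lemma hd4 (y : ℝ) : HasDerivAt (fun y : ℝ => 4*y) 4 y := by
  simpa using (hasDerivAt_id' (𝕜 := ℝ) (x := y)).const_mul (4:ℝ)

lemma hS2 (y : ℝ) : HasDerivAt (fun y : ℝ => sinh (2*y)) (2 * cosh (2*y)) y :=
  ((Real.hasDerivAt_sinh (2*y)).comp y (hd2 y)).congr_deriv (mul_comm _ _)

lemma hC2 (y : ℝ) : HasDerivAt (fun y : ℝ => cosh (2*y)) (2 * sinh (2*y)) y :=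
  ((Real.hasDerivAt_cosh (2*y)).comp y (hd2 y)).congr_deriv (mul_comm _ _)

lemma hS4 (y : ℝ) : HasDerivAt (fun y : ℝ => sinh (4*y)) (4 * cosh (4*y)) y :=
  ((Real.hasDerivAt_sinh (4*y)).comp y (hd4 y)).congr_deriv (mul_comm _ _)

lemma hC4 (y : ℝ) : HasDerivAt (fun y : ℝ => cosh (4*y)) (4 * sinh (4*y)) y :=
  ((Real.hasDerivAt_cosh (4*y)).comp y (hd4 y)).congr_deriv (mul_comm _ _)

lemma hx2 (y : ℝ) : HasDerivAt (fun y : ℝ => y^2) (2*y) y := by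
  simpa using hasDerivAt_pow 2 y

lemma hx3 (y : ℝ) : HasDerivAt (fun y : ℝ => y^3) (3*y^2) y := by
  simpa using hasDerivAt_pow 3 y

lemma hx4 (y : ℝ) : HasDerivAt (fun y : ℝ => y^4) (4*y^3) y := by
  simpa using hasDerivAt_pow 4 y

lemma hR0 (y : ℝ) : HasDerivAt R0 (R1 y) y := by
  have h4 : Real.sinh (4*y) = 2 * sinh (2*y) * cosh (2*y) := by
    rw [show (4:ℝ)*y = 2*(2*y) by ring, Real.sinh_two_mul]
  have h := (((((hasDerivAt_id' (𝕜 := ℝ) (x := y)).mul (hS2 y)).sub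
      (((hx2 y).mul ((hC2 y).sub_const 1)).const_mul 2)).sub
      (((hS2 y).mul (hS2 y)).div_const 4)).sub (hx2 y)).add
      ((hx4 y).const_mul 4)
  refine h.congr_deriv ?_
  unfold R1
  rw [h4]
  ring

lemma hR1 (y : ℝ) : HasDerivAt R1 (R2 y) y := by
  have h4 : Real.cosh (4*y) = cosh (2*y)^2 + sinh (2*y)^2 := by
    rw [show (4:ℝ)*y = 2*(2*y) by ring, Real.cosh_two_mul]
  have h := (((((hS2 y).sub
      (((hasDerivAt_id' (𝕜 := ℝ) (x := y)).mul (hC2 y)).const_mul 2)).sub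
      (((hx2 y).mul (hS2 y)).const_mul 4)).sub
      ((hS4 y).div_const 2)).add (hd2 y)).add
      ((hx3 y).const_mul 16)
  refine h.congr_deriv ?_
  unfold R2
  rw [h4]
  ring

lemma hR2 (y : ℝ) : HasDerivAt R2 (R3 y) y := by
  have h := ((((hasDerivAt_const y (2:ℝ)).add ((hx2 y).const_mul 48)).sub
      (((hasDerivAt_id' (𝕜 := ℝ) (x := y)).mul (hS2 y)).const_mul 12)).sub
      (((hx2 y).mul (hC2 y)).const_mul 8)).sub
      ((hC4 y).const_mul 2)
  refine h.congr_deriv ?_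
  unfold R3
  ring

lemma hR3 (y : ℝ) : HasDerivAt R3 (R4 y) y := by
  have h := (((((hasDerivAt_id' (𝕜 := ℝ) (x := y)).const_mul 96).sub ((hS2 y).const_mul 12)).sub
      (((hasDerivAt_id' (𝕜 := ℝ) (x := y)).mul (hC2 y)).const_mul 40)).sub
      (((hx2 y).mul (hS2 y)).const_mul 16)).sub
      ((hS4 y).const_mul 8)
  refine h.congr_deriv ?_
  unfold R4
  ring

lemma hR4 (y : ℝ) : HasDerivAt R4 (R5 y) y := by
  have h := ((((hasDerivAt_const y (96:ℝ)).sub ((hC2 y).const_mul 64)).sub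
      (((hasDerivAt_id' (𝕜 := ℝ) (x := y)).mul (hS2 y)).const_mul 112)).sub
      (((hx2 y).mul (hC2 y)).const_mul 32)).sub
      ((hC4 y).const_mul 32)
  refine h.congr_deriv ?_
  unfold R5
  ring

lemma R5_nonpos {y : ℝ} (hy : 0 ≤ y) : R5 y ≤ 0 := by
  unfold R5
  have h1 : 0 ≤ sinh (2*y) := Real.sinh_nonneg_iff.2 (by linarith)
  have h2 : 0 ≤ sinh (4*y) := Real.sinh_nonneg_iff.2 (by linarith)
  have h3 : 0 < cosh (2*y) := Real.cosh_pos _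
  nlinarith [sq_nonneg y, mul_nonneg hy h1, mul_nonneg hy h3.le]

lemma R0_nonpos {y : ℝ} (hy : 0 ≤ y) : R0 y ≤ 0 := by
  have c5 : ∀ z ∈ Set.Icc (0:ℝ) y, R5 z ≤ 0 := fun z hz => R5_nonpos hz.1
  have c4 : ∀ z, 0 ≤ z → R4 z ≤ 0 := fun z hz =>
    nonpos_of_deriv_nonpos R4 R5 hR4 (by unfold R4; norm_num) hz (fun w hw => R5_nonpos hw.1)
  have c3 : ∀ z, 0 ≤ z → R3 z ≤ 0 := fun z hz =>
    nonpos_of_deriv_nonpos R3 R4 hR3 (by unfold R3; norm_num) hz (fun w hw => c4 w hw.1)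
  have c2 : ∀ z, 0 ≤ z → R2 z ≤ 0 := fun z hz =>
    nonpos_of_deriv_nonpos R2 R3 hR2 (by unfold R2; norm_num) hz (fun w hw => c3 w hw.1)
  have c1 : ∀ z, 0 ≤ z → R1 z ≤ 0 := fun z hz =>
    nonpos_of_deriv_nonpos R1 R2 hR1 (by unfold R1; norm_num) hz (fun w hw => c2 w hw.1)
  exact nonpos_of_deriv_nonpos R0 R1 hR0 (by unfold R0; norm_num) hy (fun w hw => c1 w hw.1)

lemma M_le {y : ℝ} (hy : 0 ≤ y) :
    2*(y*(sinh y*cosh y)) - 4*(y^2*sinh y^2) - sinh y^2*cosh y^2 - y^2 ≤ -4*y^4 := by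
  have h := R0_nonpos hy
  unfold R0 at h
  rw [Real.sinh_two_mul, Real.cosh_two_mul] at h
  nlinarith [Real.cosh_sq_sub_sinh_sq y, sq_nonneg y]


lemma cosh_le_two {x : ℝ} (h0 : 0 ≤ x) (h1 : x ≤ 1) : cosh x ≤ 2 := by
  have h2 : cosh x ≤ cosh 1 := by
    rw [Real.cosh_le_cosh]
    rw [abs_of_nonneg h0]
    simpa using h1
  have h3 : cosh 1 = (exp 1 + exp (-1))/2 := Real.cosh_eq 1
  have h4 : exp (-1 : ℝ) ≤ 1 := Real.exp_le_one_iff.2 (by norm_num)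
  have h5 : exp 1 < 2.7182818286 := Real.exp_one_lt_d9
  rw [h3] at h2
  linarith

lemma sinh_le_two_mul {x : ℝ} (h0 : 0 ≤ x) (h1 : x ≤ 1) : sinh x ≤ 2*x := by
  have := nonpos_of_deriv_nonpos (fun x => sinh x - 2*x) (fun x => cosh x - 2)
    (fun x => (Real.hasDerivAt_sinh x).sub (by simpa using (hasDerivAt_id' (𝕜 := ℝ) (x := x)).const_mul (2:ℝ)))
    (by simp) h0 (fun w hw => by
      have := cosh_le_two hw.1 (le_trans hw.2 h1)
      show cosh w - 2 ≤ 0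
      linarith)
  have h2 : sinh x - 2*x ≤ 0 := this
  linarith

lemma cosh_le_one_add_sq {x : ℝ} (h0 : 0 ≤ x) (h1 : x ≤ 1) : cosh x ≤ 1 + x^2 := by
  have := nonpos_of_deriv_nonpos (fun x => cosh x - (1 + x^2)) (fun x => sinh x - 2*x)
    (fun x => (Real.hasDerivAt_cosh x).sub (by
      have := ((hasDerivAt_pow 2 x).const_add 1)
      simpa using this))
    (by simp) h0 (fun w hw => by
      have := sinh_le_two_mul hw.1 (le_trans hw.2 h1)
      show sinh w - 2*w ≤ 0
      linarith)
  have h2 : cosh x - (1 + x^2) ≤ 0 := this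
  linarith

lemma sinh_le_mul_cosh {x : ℝ} (h0 : 0 ≤ x) : sinh x ≤ x * cosh x := by
  have := nonpos_of_deriv_nonpos (fun x => sinh x - x * cosh x) (fun x => -(x * sinh x))
    (fun x => by
      have h := (Real.hasDerivAt_sinh x).sub
        ((hasDerivAt_id' (𝕜 := ℝ) (x := x)).mul (Real.hasDerivAt_cosh x))
      exact h.congr_deriv (by ring))
    (by simp) h0 (fun w hw => by
      have : 0 ≤ w * sinh w := mul_nonneg hw.1 (Real.sinh_nonneg_iff.2 hw.1)
      show -(w * sinh w) ≤ 0
      linarith)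
  have h2 : sinh x - x * cosh x ≤ 0 := this
  linarith

lemma cosh_pow_four_le {x : ℝ} (h0 : 0 ≤ x) (h1 : x ≤ 1/4) : cosh x^4 ≤ 2 := by
  have h2 : cosh x ≤ 17/16 := by
    have := cosh_le_one_add_sq h0 (by linarith)
    nlinarith
  have h3 : (0:ℝ) ≤ cosh x := (Real.cosh_pos x).le
  nlinarith [pow_le_pow_left₀ h3 h2 4]

/-- key numerator inequality -/
lemma num_ineq {y : ℝ} (hy : 0 ≤ y) (h4 : y ≤ 1/4) :
    2*(y*sinh y/cosh y)*(2 - 2*sinh y^2/cosh y^2 - 2*(y*sinh y)/cosh y^3)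
      - ((sinh y*cosh y + y)/cosh y^2)^2 ≤ -(2*y^4) := by
  have hc : (0:ℝ) < cosh y := Real.cosh_pos y
  have hcne : cosh y ≠ 0 := hc.ne'
  have hM := M_le hy
  have hEq : 2*(y*sinh y/cosh y)*(2 - 2*sinh y^2/cosh y^2 - 2*(y*sinh y)/cosh y^3)
      - ((sinh y*cosh y + y)/cosh y^2)^2
      = (2*(y*(sinh y*cosh y)) - 4*(y^2*sinh y^2) - sinh y^2*cosh y^2 - y^2) / cosh y^4 := by
    field_simp
    linear_combination (4*y*sinh y*cosh y) * (Real.cosh_sq_sub_sinh_sq y)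
  rw [hEq, div_le_iff₀ (by positivity)]
  have hch4 := cosh_pow_four_le hy h4
  nlinarith [hM, mul_nonneg (pow_nonneg hy 4) (sub_nonneg.2 hch4)]


noncomputable def ff (y : ℝ) : ℝ := y * sinh y / cosh y
noncomputable def ff1 (y : ℝ) : ℝ := (sinh y * cosh y + y) / cosh y^2
noncomputable def ff2 (y : ℝ) : ℝ := 2 - 2*sinh y^2/cosh y^2 - 2*(y*sinh y)/cosh y^3

noncomputable def om (y : ℝ) : ℝ := Real.sqrt (ff y)
noncomputable def P1 (y : ℝ) : ℝ := ff1 y / (2 * Real.sqrt (ff y))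
noncomputable def P2 (y : ℝ) : ℝ :=
  ff2 y / (2 * Real.sqrt (ff y)) - ff1 y^2 / (4 * ff y * Real.sqrt (ff y))

lemma ff_pos {y : ℝ} (hy : 0 < y) : 0 < ff y :=
  div_pos (mul_pos hy (Real.sinh_pos_iff.2 hy)) (Real.cosh_pos y)

lemma sqrt_ff_pos {y : ℝ} (hy : 0 < y) : 0 < Real.sqrt (ff y) :=
  Real.sqrt_pos.2 (ff_pos hy)

lemma hff (y : ℝ) : HasDerivAt ff (ff1 y) y := by
  have hcne : cosh y ≠ 0 := (Real.cosh_pos y).ne'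
  have h := ((hasDerivAt_id' (𝕜 := ℝ) (x := y)).mul (Real.hasDerivAt_sinh y)).div
    (Real.hasDerivAt_cosh y) hcne
  refine h.congr_deriv ?_
  unfold ff1
  simp only [Pi.mul_apply]
  linear_combination (y/cosh y^2) * (Real.cosh_sq_sub_sinh_sq y)

lemma hff1 (y : ℝ) : HasDerivAt ff1 (ff2 y) y := by
  have hcne : cosh y ≠ 0 := (Real.cosh_pos y).ne'
  have hnum : HasDerivAt (fun y : ℝ => sinh y * cosh y + y)
      (cosh y * cosh y + sinh y * sinh y + 1) y :=
    ((Real.hasDerivAt_sinh y).mul (Real.hasDerivAt_cosh y)).add (hasDerivAt_id' (𝕜 := ℝ) (x := y))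
  have hden : HasDerivAt (fun y : ℝ => cosh y^2) (2 * cosh y ^ 1 * sinh y) y := by
    exact ((Real.hasDerivAt_cosh y).pow 2).congr_deriv (by norm_num)
  have h := hnum.div hden (by positivity)
  refine h.congr_deriv ?_
  unfold ff2
  field_simp
  linear_combination (-(cosh y)) * (Real.cosh_sq_sub_sinh_sq y)

lemma hom {y : ℝ} (hy : 0 < y) : HasDerivAt om (P1 y) y := by
  have h := (Real.hasDerivAt_sqrt (ff_pos hy).ne').comp y (hff y)
  refine h.congr_deriv ?_
  unfold P1
  ring

lemma hP1 {y : ℝ} (hy : 0 < y) : HasDerivAt P1 (P2 y) y := by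
  have hs := sqrt_ff_pos hy
  have hsq : Real.sqrt (ff y) ^ 2 = ff y := Real.sq_sqrt (ff_pos hy).le
  have hden : HasDerivAt (fun y : ℝ => 2 * Real.sqrt (ff y))
      (2 * (1 / (2 * Real.sqrt (ff y)) * ff1 y)) y :=
    (((Real.hasDerivAt_sqrt (ff_pos hy).ne').comp y (hff y))).const_mul 2
  have h := (hff1 y).div hden (by positivity)
  refine h.congr_deriv ?_
  unfold P2
  have hf1 : ff y ≠ 0 := (ff_pos hy).ne'
  have hs1 : Real.sqrt (ff y) ≠ 0 := hs.ne'
  field_simp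
  linear_combination (4 * ff1 y^2) * hsq

lemma P2_le {y : ℝ} (hy : 0 < y) (h4 : y ≤ 1/4) : P2 y ≤ -(y/2) := by
  have hs := sqrt_ff_pos hy
  have hsq : Real.sqrt (ff y) ^ 2 = ff y := Real.sq_sqrt (ff_pos hy).le
  have hf := ff_pos hy
  have hf1 : ff y ≠ 0 := hf.ne'
  have hs1 : Real.sqrt (ff y) ≠ 0 := hs.ne'
  have hEq : P2 y = (2 * ff y * ff2 y - ff1 y^2) / (4 * ff y * Real.sqrt (ff y)) := by
    unfold P2
    field_simp
    ring
  have hnum : 2 * ff y * ff2 y - ff1 y^2 ≤ -(2*y^4) := by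
    have h := num_ineq hy.le h4
    unfold ff ff1 ff2
    convert h using 2
  have hfy : ff y ≤ y^2 := by
    unfold ff
    rw [div_le_iff₀ (Real.cosh_pos y)]
    nlinarith [sinh_le_mul_cosh hy.le]
  have hsy : Real.sqrt (ff y) ≤ y := by
    calc Real.sqrt (ff y) ≤ Real.sqrt (y^2) := Real.sqrt_le_sqrt hfy
    _ = y := Real.sqrt_sq hy.le
  have hfs : ff y * Real.sqrt (ff y) ≤ y^3 := by
    nlinarith [mul_le_mul hfy hsy hs.le (by positivity : (0:ℝ) ≤ y^2)]
  rw [hEq, div_le_iff₀ (mul_pos (mul_pos (by norm_num) hf) hs)]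
  nlinarith [mul_nonneg hy.le (sub_nonneg.2 hfs)]

lemma P2_contAt {y : ℝ} (hy : 0 < y) : ContinuousAt P2 y := by
  have hcont_ff : Continuous ff := by
    unfold ff
    exact (continuous_id.mul Real.continuous_sinh).div Real.continuous_cosh
      (fun x => (Real.cosh_pos x).ne')
  have h1 : ContinuousAt ff1 y := by
    unfold ff1
    exact ContinuousAt.div (by fun_prop) (by fun_prop) (by positivity)
  have h2 : ContinuousAt ff2 y := by
    unfold ff2
    have := Real.cosh_pos y
    exact ContinuousAt.sub (ContinuousAt.sub (by fun_prop) (by fun_prop (disch := positivity)))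
      (by fun_prop (disch := positivity))
  have hsf : ContinuousAt (fun y => Real.sqrt (ff y)) y :=
    Real.continuous_sqrt.continuousAt.comp hcont_ff.continuousAt
  unfold P2
  refine ContinuousAt.sub (ContinuousAt.div h2 (by fun_prop) ?_)
    (ContinuousAt.div (by fun_prop) (by fun_prop) ?_)
  · have := sqrt_ff_pos hy; positivity
  · have := sqrt_ff_pos hy; have := ff_pos hy; positivity


lemma norm_exp_I_mul (r : ℝ) : ‖Complex.exp (Complex.I * r)‖ = 1 := by
  simp [Complex.norm_exp]

/-- quantitative decrease from a derivative bound -/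
lemma psi_decrease (ψ ψd : ℝ → ℝ) (a b m : ℝ)
    (hψ : ∀ x ∈ Set.Icc a b, HasDerivAt ψ (ψd x) x)
    (hd : ∀ x ∈ Set.Icc a b, ψd x ≤ -m) :
    ∀ u v, u ∈ Set.Icc a b → v ∈ Set.Icc a b → u ≤ v → ψ v + m*(v - u) ≤ ψ u := by
  intro u v hu hv huv
  have hanti : AntitoneOn (fun x => ψ x + m*x) (Set.Icc a b) := by
    apply antitoneOn_of_deriv_nonpos (convex_Icc a b)
    · intro x hx
      exact ((hψ x hx).add ((hasDerivAt_id' (𝕜 := ℝ) (x := x)).const_mul m)).continuousAt.continuousWithinAt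
    · intro x hx
      have hx' : x ∈ Set.Icc a b := interior_subset hx
      exact ((hψ x hx').add ((hasDerivAt_id' (𝕜 := ℝ) (x := x)).const_mul m)).differentiableAt.differentiableWithinAt
    · intro x hx
      have hx' : x ∈ Set.Icc a b := interior_subset hx
      rw [(show HasDerivAt (fun x => ψ x + m * x) _ x from (hψ x hx').add ((hasDerivAt_id' (𝕜 := ℝ) (x := x)).const_mul m)).deriv]
      linarith [hd x hx']
  have := hanti hu hv huv
  simp only at this
  linarith

/-- first van der Corput lemma: `|ψ| ≥ ρ`, `ψ` decreasing. -/
lemma vdc1 (φ ψ ψd : ℝ → ℝ) (a b ρ : ℝ) (hab : a ≤ b) (hρ : 0 < ρ)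
    (hφ : ∀ x ∈ Set.Icc a b, HasDerivAt φ (ψ x) x)
    (hψ : ∀ x ∈ Set.Icc a b, HasDerivAt ψ (ψd x) x)
    (hψd : ∀ x ∈ Set.Icc a b, ψd x ≤ 0)
    (hlow : ∀ x ∈ Set.Icc a b, ρ ≤ |ψ x|)
    (hcont : ContinuousOn ψd (Set.Icc a b)) :
    ‖∫ x in a..b, Complex.exp (Complex.I * (φ x : ℂ))‖ ≤ 3/ρ := by
  have ha : a ∈ Set.Icc a b := Set.left_mem_Icc.2 hab
  have hb : b ∈ Set.Icc a b := Set.right_mem_Icc.2 hab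
  have hψne : ∀ x ∈ Set.Icc a b, ψ x ≠ 0 := fun x hx => by
    have := hlow x hx; intro h; rw [h] at this; simp at this; linarith
  have hφc : ContinuousOn φ (Set.Icc a b) := fun x hx => (hφ x hx).continuousAt.continuousWithinAt
  have hψc : ContinuousOn ψ (Set.Icc a b) := fun x hx => (hψ x hx).continuousAt.continuousWithinAt
  -- the exponential and its friends
  set e : ℝ → ℂ := fun x => Complex.exp (Complex.I * (φ x : ℂ)) with he
  have hec : ContinuousOn e (Set.Icc a b) := by
    apply Complex.continuous_exp.comp_continuousOn
    exact (continuous_const.continuousOn.mul (Complex.continuous_ofReal.comp_continuousOn hφc))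
  have hede : ∀ x ∈ Set.Icc a b, HasDerivAt e (Complex.I * (ψ x : ℂ) * e x) x := by
    intro x hx
    have h1 : HasDerivAt (fun x : ℝ => Complex.I * (φ x : ℂ)) (Complex.I * (ψ x : ℂ)) x :=
      ((hφ x hx).ofReal_comp).const_mul Complex.I
    exact h1.cexp.congr_deriv (by ring)
  -- the antiderivative F
  set F : ℝ → ℂ := fun x => e x / (Complex.I * (ψ x : ℂ)) with hF
  have hFd : ∀ x ∈ Set.Icc a b, HasDerivAt F
      (e x + Complex.I * (ψd x : ℂ) * e x / (ψ x : ℂ)^2) x := by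
    intro x hx
    have hne : Complex.I * (ψ x : ℂ) ≠ 0 := by
      simp [Complex.I_ne_zero, Complex.ofReal_ne_zero.2 (hψne x hx)]
    have h := (hede x hx).div (((hψ x hx).ofReal_comp).const_mul Complex.I) hne
    refine h.congr_deriv ?_
    have hne2 : (ψ x : ℂ) ≠ 0 := Complex.ofReal_ne_zero.2 (hψne x hx)
    field_simp
    ring_nf
    rw [Complex.I_sq]
    ring
  -- FTC
  have hint_e : IntervalIntegrable e MeasureTheory.volume a b :=
    (hec.mono (by rw [Set.uIcc_of_le hab])).intervalIntegrable
  have hint_g : IntervalIntegrable (fun x => Complex.I * (ψd x : ℂ) * e x / (ψ x : ℂ)^2)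
      MeasureTheory.volume a b := by
    apply ContinuousOn.intervalIntegrable
    rw [Set.uIcc_of_le hab]
    apply ContinuousOn.div
    · exact (continuous_const.continuousOn.mul
        (Complex.continuous_ofReal.comp_continuousOn hcont)).mul hec
    · exact (Complex.continuous_ofReal.comp_continuousOn hψc).pow 2
    · intro x hx
      exact pow_ne_zero 2 (Complex.ofReal_ne_zero.2 (hψne x hx))
  have hFTC : ∫ x in a..b, (e x + Complex.I * (ψd x : ℂ) * e x / (ψ x : ℂ)^2)
      = F b - F a := by
    apply intervalIntegral.integral_eq_sub_of_hasDerivAt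
    · intro x hx
      rw [Set.uIcc_of_le hab] at hx
      exact hFd x hx
    · exact hint_e.add hint_g
  have hsplit : ∫ x in a..b, e x
      = F b - F a - ∫ x in a..b, Complex.I * (ψd x : ℂ) * e x / (ψ x : ℂ)^2 := by
    rw [← hFTC, intervalIntegral.integral_add hint_e hint_g]
    ring
  -- bound each piece
  have hnorme : ∀ x, ‖e x‖ = 1 := fun x => norm_exp_I_mul (φ x)
  have hFb : ‖F b‖ ≤ 1/ρ := by
    rw [hF]
    simp only [norm_div, norm_mul, Complex.norm_I, Complex.norm_real, Real.norm_eq_abs, one_mul]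
    rw [show ‖Complex.exp (Complex.I * (φ b : ℂ))‖ = 1 by
      exact hnorme b]
    rw [div_le_div_iff₀ (by have := hlow b hb; linarith) hρ]
    have := hlow b hb; linarith
  have hFa : ‖F a‖ ≤ 1/ρ := by
    rw [hF]
    simp only [norm_div, norm_mul, Complex.norm_I, Complex.norm_real, Real.norm_eq_abs, one_mul]
    rw [show ‖Complex.exp (Complex.I * (φ a : ℂ))‖ = 1 by
      exact hnorme a]
    rw [div_le_div_iff₀ (by have := hlow a ha; linarith) hρ]
    have := hlow a ha; linarith
  -- the integral of the remainder
  have hGd : ∀ x ∈ Set.Icc a b, HasDerivAt (fun x => (ψ x)⁻¹) (-ψd x / (ψ x)^2) x := by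
    intro x hx
    exact ((hψ x hx).inv (hψne x hx)).congr_deriv (by ring)
  have hint_r : IntervalIntegrable (fun x => -ψd x / (ψ x)^2) MeasureTheory.volume a b := by
    apply ContinuousOn.intervalIntegrable
    rw [Set.uIcc_of_le hab]
    exact (hcont.neg.div (hψc.pow 2) (fun x hx => pow_ne_zero 2 (hψne x hx)))
  have hFTC2 : ∫ x in a..b, -ψd x / (ψ x)^2 = (ψ b)⁻¹ - (ψ a)⁻¹ := by
    apply intervalIntegral.integral_eq_sub_of_hasDerivAt
    · intro x hx
      rw [Set.uIcc_of_le hab] at hx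
      exact hGd x hx
    · exact hint_r
  have hmono : ψ b ≤ ψ a := by
    have := psi_decrease ψ ψd a b 0 hψ (by simpa using hψd) a b ha hb hab
    linarith
  have hinvbound : (ψ b)⁻¹ - (ψ a)⁻¹ ≤ 1/ρ := by
    have hbb := hlow b hb
    have haa := hlow a ha
    rcases le_abs.1 hbb with h1 | h1 <;> rcases le_abs.1 haa with h2 | h2
    · -- ψ b ≥ ρ, ψ a ≥ ρ
      have hh1 : (ψ b)⁻¹ ≤ ρ⁻¹ := inv_anti₀ hρ h1
      have h3 : 0 < ψ a := lt_of_lt_of_le hρ h2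
      have hh2 : 0 < (ψ a)⁻¹ := by positivity
      rw [one_div]
      linarith
    · -- ψ b ≥ ρ, ψ a ≤ -ρ : contradiction with monotone
      exfalso; linarith
    · -- ψ b ≤ -ρ, ψ a ≥ ρ
      have h3 : (ψ b)⁻¹ < 0 := inv_neg''.2 (by linarith)
      have h4 : 0 < (ψ a)⁻¹ := inv_pos.2 (by linarith)
      have : 0 < 1/ρ := by positivity
      linarith
    · -- ψ b ≤ -ρ, ψ a ≤ -ρ
      have h3 : (ψ b)⁻¹ < 0 := inv_neg''.2 (by linarith)
      have h4 : ρ ≤ -ψ a := by linarith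
      have h5 : (-ψ a)⁻¹ ≤ ρ⁻¹ := inv_anti₀ hρ h4
      rw [inv_neg] at h5
      rw [one_div]
      linarith
  have hnormr : ‖∫ x in a..b, Complex.I * (ψd x : ℂ) * e x / (ψ x : ℂ)^2‖ ≤ 1/ρ := by
    have h1 : ‖∫ x in a..b, Complex.I * (ψd x : ℂ) * e x / (ψ x : ℂ)^2‖
        ≤ ∫ x in a..b, ‖Complex.I * (ψd x : ℂ) * e x / (ψ x : ℂ)^2‖ :=
      intervalIntegral.norm_integral_le_integral_norm hab
    have h2 : ∀ x ∈ Set.Icc a b, ‖Complex.I * (ψd x : ℂ) * e x / (ψ x : ℂ)^2‖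
        = -ψd x / (ψ x)^2 := by
      intro x hx
      simp only [norm_div, norm_mul, Complex.norm_I, Complex.norm_real, Real.norm_eq_abs, one_mul]
      rw [show ‖Complex.exp (Complex.I * (φ x : ℂ))‖ = 1 by
        exact hnorme x]
      rw [show ‖((ψ x : ℂ)^2)‖ = (ψ x)^2 by
        rw [norm_pow]; simp [sq_abs]]
      rw [abs_of_nonpos (hψd x hx)]
      ring
    have h3 : (∫ x in a..b, ‖Complex.I * (ψd x : ℂ) * e x / (ψ x : ℂ)^2‖)
        = ∫ x in a..b, -ψd x / (ψ x)^2 := by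
      apply intervalIntegral.integral_congr
      intro x hx
      rw [Set.uIcc_of_le hab] at hx
      exact h2 x hx
    rw [h3, hFTC2] at h1
    linarith [hinvbound]
  calc ‖∫ x in a..b, e x‖
      = ‖F b - F a - ∫ x in a..b, Complex.I * (ψd x : ℂ) * e x / (ψ x : ℂ)^2‖ := by rw [hsplit]
    _ ≤ ‖F b - F a‖ + ‖∫ x in a..b, Complex.I * (ψd x : ℂ) * e x / (ψ x : ℂ)^2‖ := norm_sub_le _ _
    _ ≤ (‖F b‖ + ‖F a‖) + 1/ρ := add_le_add (le_trans (norm_sub_le _ _) le_rfl |>.trans (add_le_add le_rfl le_rfl)) hnormr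
    _ ≤ 1/ρ + 1/ρ + 1/ρ := by refine add_le_add (add_le_add hFb hFa) le_rfl
    _ = 3/ρ := by ring


lemma triv_bound (φ : ℝ → ℝ) (a b : ℝ) (hab : a ≤ b) :
    ‖∫ x in a..b, Complex.exp (Complex.I * (φ x : ℂ))‖ ≤ b - a := by
  have h := intervalIntegral.norm_integral_le_of_norm_le_const
    (f := fun x => Complex.exp (Complex.I * (φ x : ℂ))) (C := 1) (a := a) (b := b)
    (fun x _ => le_of_eq (norm_exp_I_mul (φ x)))
  rw [abs_of_nonneg (by linarith)] at h
  linarith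

lemma vdc2 (φ ψ ψd : ℝ → ℝ) (a b m : ℝ) (hab : a ≤ b) (hm : 0 < m)
    (hφ : ∀ x ∈ Set.Icc a b, HasDerivAt φ (ψ x) x)
    (hψ : ∀ x ∈ Set.Icc a b, HasDerivAt ψ (ψd x) x)
    (hψd : ∀ x ∈ Set.Icc a b, ψd x ≤ -m)
    (hcont : ContinuousOn ψd (Set.Icc a b)) :
    ‖∫ x in a..b, Complex.exp (Complex.I * (φ x : ℂ))‖ ≤ 8 / Real.sqrt m := by
  set ρ := Real.sqrt m with hρdef
  have hρ : 0 < ρ := Real.sqrt_pos.2 hm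
  have hρ2 : ρ^2 = m := Real.sq_sqrt hm.le
  have hdec := psi_decrease ψ ψd a b m hψ hψd
  have hψc : ContinuousOn ψ (Set.Icc a b) := fun x hx => (hψ x hx).continuousAt.continuousWithinAt
  have hφc : ContinuousOn φ (Set.Icc a b) := fun x hx => (hφ x hx).continuousAt.continuousWithinAt
  have hψd0 : ∀ x ∈ Set.Icc a b, ψd x ≤ 0 := fun x hx => le_trans (hψd x hx) (by linarith)
  have key38 : (3:ℝ)/ρ ≤ 8/ρ := by
    gcongr
    norm_num
  -- Case 1 : ψ ≥ ρ on the whole interval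
  rcases le_or_gt ρ (ψ b) with hb1 | hb1
  · have hlow : ∀ x ∈ Set.Icc a b, ρ ≤ |ψ x| := by
      intro x hx
      have h := hdec x b hx (Set.right_mem_Icc.2 hab) hx.2
      have : ρ ≤ ψ x := by nlinarith [hx.2, mul_nonneg hm.le (sub_nonneg.2 hx.2)]
      exact this.trans (le_abs_self _)
    exact (vdc1 φ ψ ψd a b ρ hab hρ hφ hψ hψd0 hlow hcont).trans key38
  rcases le_or_gt (ψ a) (-ρ) with ha1 | ha1
  · have hlow : ∀ x ∈ Set.Icc a b, ρ ≤ |ψ x| := by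
      intro x hx
      have h := hdec a x (Set.left_mem_Icc.2 hab) hx hx.1
      have : ψ x ≤ -ρ := by nlinarith [mul_nonneg hm.le (sub_nonneg.2 hx.1)]
      exact le_trans (by linarith [neg_le_abs (ψ x)] : ρ ≤ -ψ x) (neg_le_abs _)
    exact (vdc1 φ ψ ψd a b ρ hab hρ hφ hψ hψd0 hlow hcont).trans key38
  -- now `ψ b < ρ` and `-ρ < ψ a`
  obtain ⟨c₁, hc₁mem, hc₁⟩ : ∃ c ∈ Set.Icc a b, ψ c = ρ ∨ (c = a ∧ ψ a ≤ ρ) := by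
    rcases le_or_gt (ψ a) ρ with h | h
    · exact ⟨a, Set.left_mem_Icc.2 hab, Or.inr ⟨rfl, h⟩⟩
    · obtain ⟨c, hc, hceq⟩ := intermediate_value_Icc' hab hψc ⟨hb1.le, h.le⟩
      exact ⟨c, hc, Or.inl hceq⟩
  obtain ⟨c₂, hc₂mem, hc₂⟩ : ∃ c ∈ Set.Icc a b, ψ c = -ρ ∨ (c = b ∧ -ρ ≤ ψ b) := by
    rcases le_or_gt (-ρ) (ψ b) with h | h
    · exact ⟨b, Set.right_mem_Icc.2 hab, Or.inr ⟨rfl, h⟩⟩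
    · obtain ⟨c, hc, hceq⟩ := intermediate_value_Icc' hab hψc ⟨h.le, ha1.le⟩
      exact ⟨c, hc, Or.inl hceq⟩
  have hψc₁ : ψ c₁ ≤ ρ := by
    rcases hc₁ with h | ⟨h1, h2⟩
    · exact le_of_eq h
    · rw [h1]; exact h2
  have hψc₂ : -ρ ≤ ψ c₂ := by
    rcases hc₂ with h | ⟨h1, h2⟩
    · exact ge_of_eq h
    · rw [h1]; exact h2
  have hc₁c₂ : c₁ ≤ c₂ := by
    rcases hc₁ with h1 | ⟨h1, _⟩
    · rcases hc₂ with h2 | ⟨h2, _⟩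
      · by_contra hcon
        push_neg at hcon
        have h := hdec c₂ c₁ hc₂mem hc₁mem hcon.le
        nlinarith [mul_pos hm (sub_pos.2 hcon)]
      · rw [h2]; exact hc₁mem.2
    · rw [h1]; exact hc₂mem.1
  -- piece bounds
  have hsub1 : Set.Icc a c₁ ⊆ Set.Icc a b := Set.Icc_subset_Icc le_rfl hc₁mem.2
  have hsub2 : Set.Icc c₂ b ⊆ Set.Icc a b := Set.Icc_subset_Icc hc₂mem.1 le_rfl
  have hP1 : ‖∫ x in a..c₁, Complex.exp (Complex.I * (φ x : ℂ))‖ ≤ 3/ρ := by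
    rcases hc₁ with hceq | ⟨hca, _⟩
    · apply vdc1 φ ψ ψd a c₁ ρ hc₁mem.1 hρ (fun x hx => hφ x (hsub1 hx))
        (fun x hx => hψ x (hsub1 hx)) (fun x hx => hψd0 x (hsub1 hx)) ?_ (hcont.mono hsub1)
      intro x hx
      have h := hdec x c₁ (hsub1 hx) hc₁mem hx.2
      have : ρ ≤ ψ x := by nlinarith [mul_nonneg hm.le (sub_nonneg.2 hx.2)]
      exact this.trans (le_abs_self _)
    · rw [hca, intervalIntegral.integral_same]
      simp
      positivity
  have hP3 : ‖∫ x in c₂..b, Complex.exp (Complex.I * (φ x : ℂ))‖ ≤ 3/ρ := by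
    rcases hc₂ with hceq | ⟨hcb, _⟩
    · apply vdc1 φ ψ ψd c₂ b ρ hc₂mem.2 hρ (fun x hx => hφ x (hsub2 hx))
        (fun x hx => hψ x (hsub2 hx)) (fun x hx => hψd0 x (hsub2 hx)) ?_ (hcont.mono hsub2)
      intro x hx
      have h := hdec c₂ x hc₂mem (hsub2 hx) hx.1
      have : ψ x ≤ -ρ := by nlinarith [mul_nonneg hm.le (sub_nonneg.2 hx.1)]
      exact le_trans (by linarith : ρ ≤ -ψ x) (neg_le_abs _)
    · rw [hcb, intervalIntegral.integral_same]
      simp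
      positivity
  have hP2 : ‖∫ x in c₁..c₂, Complex.exp (Complex.I * (φ x : ℂ))‖ ≤ 2*ρ/m := by
    have hlen : c₂ - c₁ ≤ 2*ρ/m := by
      have h := hdec c₁ c₂ hc₁mem hc₂mem hc₁c₂
      rw [le_div_iff₀ hm]
      nlinarith
    exact (triv_bound φ c₁ c₂ hc₁c₂).trans hlen
  -- combine
  have hintc : ∀ u v, u ∈ Set.Icc a b → v ∈ Set.Icc a b →
      IntervalIntegrable (fun x => Complex.exp (Complex.I * (φ x : ℂ))) MeasureTheory.volume u v := by
    intro u v hu hv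
    apply ContinuousOn.intervalIntegrable
    apply (Complex.continuous_exp.comp_continuousOn
      (continuous_const.continuousOn.mul (Complex.continuous_ofReal.comp_continuousOn
        (hφc.mono ?_)))) 
    exact Set.uIcc_subset_Icc hu hv
  have e1 : (∫ x in a..c₁, Complex.exp (Complex.I * (φ x : ℂ)))
      + (∫ x in c₁..c₂, Complex.exp (Complex.I * (φ x : ℂ)))
      = ∫ x in a..c₂, Complex.exp (Complex.I * (φ x : ℂ)) :=
    intervalIntegral.integral_add_adjacent_intervals
      (hintc a c₁ (Set.left_mem_Icc.2 hab) hc₁mem) (hintc c₁ c₂ hc₁mem hc₂mem)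
  have e2 : (∫ x in a..c₂, Complex.exp (Complex.I * (φ x : ℂ)))
      + (∫ x in c₂..b, Complex.exp (Complex.I * (φ x : ℂ)))
      = ∫ x in a..b, Complex.exp (Complex.I * (φ x : ℂ)) :=
    intervalIntegral.integral_add_adjacent_intervals
      (hintc a c₂ (Set.left_mem_Icc.2 hab) hc₂mem) (hintc c₂ b hc₂mem (Set.right_mem_Icc.2 hab))
  have hfinal : ‖∫ x in a..b, Complex.exp (Complex.I * (φ x : ℂ))‖ ≤ 3/ρ + 2*ρ/m + 3/ρ := by
    rw [← e2, ← e1]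
    calc ‖((∫ x in a..c₁, Complex.exp (Complex.I * (φ x : ℂ)))
          + (∫ x in c₁..c₂, Complex.exp (Complex.I * (φ x : ℂ))))
          + (∫ x in c₂..b, Complex.exp (Complex.I * (φ x : ℂ)))‖
        ≤ ‖(∫ x in a..c₁, Complex.exp (Complex.I * (φ x : ℂ)))
          + (∫ x in c₁..c₂, Complex.exp (Complex.I * (φ x : ℂ)))‖
          + ‖∫ x in c₂..b, Complex.exp (Complex.I * (φ x : ℂ))‖ := norm_add_le _ _
      _ ≤ (‖∫ x in a..c₁, Complex.exp (Complex.I * (φ x : ℂ))‖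
          + ‖∫ x in c₁..c₂, Complex.exp (Complex.I * (φ x : ℂ))‖)
          + ‖∫ x in c₂..b, Complex.exp (Complex.I * (φ x : ℂ))‖ :=
            add_le_add_left (norm_add_le _ _) _
      _ ≤ (3/ρ + 2*ρ/m) + 3/ρ := add_le_add (add_le_add hP1 hP2) hP3
      _ = 3/ρ + 2*ρ/m + 3/ρ := by ring
  have : 3/ρ + 2*ρ/m + 3/ρ = 8/ρ := by
    have hρne : ρ ≠ 0 := hρ.ne'
    have hmne : m ≠ 0 := hm.ne'
    field_simp
    nlinarith [hρ2]
  rw [this] at hfinal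
  exact hfinal


section Scaled
variable {μ : ℝ}

lemma omega_eq (hμ : 0 < μ) {ξ : ℝ} (hξ : 0 < ξ) :
    omegaWW μ ξ = om (Real.sqrt μ * ξ) / Real.sqrt μ := by
  have hc : 0 < Real.sqrt μ := Real.sqrt_pos.2 hμ
  have hcy : 0 < Real.sqrt μ * ξ := mul_pos hc hξ
  have hf0 : 0 ≤ ff (Real.sqrt μ * ξ) :=
    le_of_lt (div_pos (mul_pos hcy (Real.sinh_pos_iff.2 hcy)) (Real.cosh_pos _))
  have key : Real.sqrt (ff (Real.sqrt μ * ξ)/μ) = om (Real.sqrt μ * ξ) / Real.sqrt μ := by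
    unfold om
    rw [Real.sqrt_div hf0]
  rw [← key]
  unfold omegaWW
  congr 1
  rw [abs_of_pos hξ, Real.tanh_eq_sinh_div_cosh]
  unfold ff
  have hch : cosh (Real.sqrt μ * ξ) ≠ 0 := (Real.cosh_pos _).ne'
  have hc2 : (Real.sqrt μ)^2 = μ := Real.sq_sqrt hμ.le
  field_simp
  linear_combination (-1) * hc2

lemma hW1 (hμ : 0 < μ) {ξ : ℝ} (hξ : 0 < ξ) :
    HasDerivAt (omegaWW μ) (P1 (Real.sqrt μ * ξ)) ξ := by
  have hc : 0 < Real.sqrt μ := Real.sqrt_pos.2 hμ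
  have hdc : HasDerivAt (fun ξ : ℝ => Real.sqrt μ * ξ) (Real.sqrt μ) ξ := by
    simpa using (hasDerivAt_id' (𝕜 := ℝ) (x := ξ)).const_mul (Real.sqrt μ)
  have h1 : HasDerivAt (fun ξ => om (Real.sqrt μ * ξ) / Real.sqrt μ)
      (P1 (Real.sqrt μ * ξ)) ξ := by
    have := ((hom (mul_pos hc hξ)).comp ξ hdc).div_const (Real.sqrt μ)
    refine this.congr_deriv ?_
    field_simp
  apply h1.congr_of_eventuallyEq
  filter_upwards [Ioi_mem_nhds hξ] with z hz
  exact omega_eq hμ hz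

lemma hW2 (hμ : 0 < μ) {ξ : ℝ} (hξ : 0 < ξ) :
    HasDerivAt (fun ξ => P1 (Real.sqrt μ * ξ)) (Real.sqrt μ * P2 (Real.sqrt μ * ξ)) ξ := by
  have hc : 0 < Real.sqrt μ := Real.sqrt_pos.2 hμ
  have hdc : HasDerivAt (fun ξ : ℝ => Real.sqrt μ * ξ) (Real.sqrt μ) ξ := by
    simpa using (hasDerivAt_id' (𝕜 := ℝ) (x := ξ)).const_mul (Real.sqrt μ)
  have := (hP1 (mul_pos hc hξ)).comp ξ hdc
  exact this.congr_deriv (by ring)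

end Scaled

lemma cont_integrand (μ t x : ℝ) :
    Continuous (fun ξ : ℝ => Complex.exp (Complex.I * ((t * omegaWW μ ξ + x * ξ : ℝ) : ℂ))) := by
  have htanh : Continuous Real.tanh := by
    have h : Real.tanh = fun y => Real.sinh y / Real.cosh y :=
      funext fun y => Real.tanh_eq_sinh_div_cosh y
    rw [h]
    exact Real.continuous_sinh.div Real.continuous_cosh (fun y => (Real.cosh_pos y).ne')
  have hcw : Continuous (omegaWW μ) := by
    unfold omegaWW
    exact Real.continuous_sqrt.comp
      ((continuous_abs.mul (htanh.comp (continuous_const.mul continuous_abs))).div_const _)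
  have hφ : Continuous (fun ξ : ℝ => t * omegaWW μ ξ + x * ξ) :=
    (continuous_const.mul hcw).add (continuous_const.mul continuous_id)
  exact Complex.continuous_exp.comp (continuous_const.mul (Complex.continuous_ofReal.comp hφ))

lemma half_bound (μ t x : ℝ) (hμ : 0 < μ) (ht : 0 < t) :
    ‖∫ ξ in (0:ℝ)..(1/4/Real.sqrt μ),
        Complex.exp (Complex.I * ((t * omegaWW μ ξ + x * ξ : ℝ) : ℂ))‖
      ≤ 13 * (μ*t) ^ (-(1:ℝ)/3) := by
  have hc : 0 < Real.sqrt μ := Real.sqrt_pos.2 hμ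
  have hc2 : Real.sqrt μ ^ 2 = μ := Real.sq_sqrt hμ.le
  set c := Real.sqrt μ with hcdef
  set L := 1/4/c with hLdef
  have hL : 0 ≤ L := by positivity
  set P := μ * t with hPdef
  have hP : 0 < P := mul_pos hμ ht
  set δ := P ^ (-(1:ℝ)/3) with hδdef
  have hδ : 0 < δ := Real.rpow_pos_of_pos hP _
  set φ : ℝ → ℝ := fun ξ => t * omegaWW μ ξ + x * ξ with hφdef
  set ψ : ℝ → ℝ := fun ξ => t * P1 (c*ξ) + x with hψdef
  set ψd : ℝ → ℝ := fun ξ => t * (c * P2 (c*ξ)) with hψddef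
  have hφ' : ∀ ξ : ℝ, 0 < ξ → HasDerivAt φ (ψ ξ) ξ := by
    intro ξ hξ
    have h := ((hW1 hμ hξ).const_mul t).add ((hasDerivAt_id' (𝕜 := ℝ) (x := ξ)).const_mul x)
    exact h.congr_deriv (by simp [hψdef, hcdef])
  have hψ' : ∀ ξ : ℝ, 0 < ξ → HasDerivAt ψ (ψd ξ) ξ := by
    intro ξ hξ
    have h := ((hW2 hμ hξ).const_mul t).add_const x
    exact h.congr_deriv rfl
  have hψd_le : ∀ ξ : ℝ, 0 < ξ → ξ ≤ L → ψd ξ ≤ -(μ*t*ξ/2) := by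
    intro ξ hξ hξL
    have hcy : 0 < c*ξ := mul_pos hc hξ
    have h14 : c*ξ ≤ 1/4 := by
      rw [hLdef, le_div_iff₀ hc] at hξL
      linarith [hξL]
    have hp2 := P2_le hcy h14
    have : c * P2 (c*ξ) ≤ c * (-(c*ξ/2)) := by
      apply mul_le_mul_of_nonneg_left _ hc.le
      linarith
    have h2 : t * (c * P2 (c*ξ)) ≤ t * (c * (-(c*ξ/2))) :=
      mul_le_mul_of_nonneg_left this ht.le
    calc ψd ξ ≤ t * (c * (-(c*ξ/2))) := h2
      _ = -(c^2*t*ξ/2) := by ring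
      _ = -(μ*t*ξ/2) := by rw [hc2]
  have hint : ∀ u v : ℝ, IntervalIntegrable
      (fun ξ => Complex.exp (Complex.I * ((φ ξ : ℝ) : ℂ))) MeasureTheory.volume u v :=
    fun u v => (cont_integrand μ t x).intervalIntegrable u v
  rcases le_or_gt L δ with hLδ | hδL
  · calc ‖∫ ξ in (0:ℝ)..L, Complex.exp (Complex.I * ((φ ξ : ℝ) : ℂ))‖
        ≤ L - 0 := triv_bound φ 0 L hL
      _ ≤ 13 * δ := by linarith
  · have hsplit : (∫ ξ in (0:ℝ)..δ, Complex.exp (Complex.I * ((φ ξ : ℝ) : ℂ)))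
        + (∫ ξ in δ..L, Complex.exp (Complex.I * ((φ ξ : ℝ) : ℂ)))
        = ∫ ξ in (0:ℝ)..L, Complex.exp (Complex.I * ((φ ξ : ℝ) : ℂ)) :=
      intervalIntegral.integral_add_adjacent_intervals (hint 0 δ) (hint δ L)
    have hb1 : ‖∫ ξ in (0:ℝ)..δ, Complex.exp (Complex.I * ((φ ξ : ℝ) : ℂ))‖ ≤ δ := by
      have := triv_bound φ 0 δ hδ.le
      linarith
    set m := μ*t*δ/2 with hmdef
    have hm : 0 < m := by positivity
    have hb2 : ‖∫ ξ in δ..L, Complex.exp (Complex.I * ((φ ξ : ℝ) : ℂ))‖ ≤ 8 / Real.sqrt m := by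
      apply vdc2 φ ψ ψd δ L m hδL.le hm
      · exact fun ξ hξ => hφ' ξ (lt_of_lt_of_le hδ hξ.1)
      · exact fun ξ hξ => hψ' ξ (lt_of_lt_of_le hδ hξ.1)
      · intro ξ hξ
        have h1 := hψd_le ξ (lt_of_lt_of_le hδ hξ.1) hξ.2
        have h2 : μ*t*δ/2 ≤ μ*t*ξ/2 := by
          have := hξ.1
          nlinarith
        linarith
      · intro ξ hξ
        have hξ0 : 0 < c*ξ := mul_pos hc (lt_of_lt_of_le hδ hξ.1)
        have h1 : ContinuousAt (fun ξ => P2 (c*ξ)) ξ :=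
          ContinuousAt.comp (P2_contAt hξ0) (by fun_prop)
        have h2 : ContinuousAt (fun k => t * (c * P2 (c*k))) ξ :=
          continuousAt_const.mul (continuousAt_const.mul h1)
        exact h2.continuousWithinAt
    -- rpow algebra : 8 / √m ≤ 12 δ
    have hPδ : P * δ = P ^ ((2:ℝ)/3) := by
      rw [show P * δ = P^(1:ℝ) * P^(-(1:ℝ)/3) by rw [Real.rpow_one],
        ← Real.rpow_add hP]
      norm_num
    have hm_eq : m = P ^ ((2:ℝ)/3) / 2 := by
      rw [← hPδ, hmdef, hPdef]
    have hsq : Real.sqrt m = P ^ ((1:ℝ)/3) / Real.sqrt 2 := by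
      rw [hm_eq, Real.sqrt_div (by positivity) 2]
      congr 1
      rw [Real.sqrt_eq_rpow, ← Real.rpow_mul hP.le]
      norm_num
    have hinv : δ = (P ^ ((1:ℝ)/3))⁻¹ := by
      rw [hδdef, show (-(1:ℝ)/3) = -((1:ℝ)/3) by norm_num, Real.rpow_neg hP.le]
    have hsqrt2 : Real.sqrt 2 ≤ 1.5 := by
      nlinarith [Real.sq_sqrt (by norm_num : (0:ℝ) ≤ 2), Real.sqrt_nonneg 2]
    have hsqrt2' : (1:ℝ) ≤ Real.sqrt 2 := by
      nlinarith [Real.sq_sqrt (by norm_num : (0:ℝ) ≤ 2), Real.sqrt_nonneg 2]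
    have h8 : 8 / Real.sqrt m = 8 * Real.sqrt 2 * δ := by
      rw [hsq, hinv]
      have hp13 : 0 < P ^ ((1:ℝ)/3) := Real.rpow_pos_of_pos hP _
      field_simp
    have h12 : 8 / Real.sqrt m ≤ 12 * δ := by
      rw [h8]
      nlinarith
    calc ‖∫ ξ in (0:ℝ)..L, Complex.exp (Complex.I * ((φ ξ : ℝ) : ℂ))‖
        = ‖(∫ ξ in (0:ℝ)..δ, Complex.exp (Complex.I * ((φ ξ : ℝ) : ℂ)))
          + (∫ ξ in δ..L, Complex.exp (Complex.I * ((φ ξ : ℝ) : ℂ)))‖ := by rw [hsplit]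
      _ ≤ ‖∫ ξ in (0:ℝ)..δ, Complex.exp (Complex.I * ((φ ξ : ℝ) : ℂ))‖
          + ‖∫ ξ in δ..L, Complex.exp (Complex.I * ((φ ξ : ℝ) : ℂ))‖ := norm_add_le _ _
      _ ≤ δ + 12 * δ := add_le_add hb1 (hb2.trans h12)
      _ = 13 * δ := by ring

end LowFreqAux

open LowFreqAux in
/-- Low-frequency oscillatory integral with cubic decay. -/
theorem low_frequency_oscillatory_integral_cubic_decay :
    ∃ y₀ > 0, ∃ C > 0, ∀ μ > 0, ∀ t > 0, ∀ x : ℝ,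
      ‖∫ ξ in Set.Icc (-(y₀ / Real.sqrt μ)) (y₀ / Real.sqrt μ),
          Complex.exp (Complex.I * ((t * omegaWW μ ξ + x * ξ : ℝ) : ℂ))‖ ≤
        C * (μ * t) ^ (-(1:ℝ)/3) := by
  refine ⟨1/4, by norm_num, 26, by norm_num, ?_⟩
  intro μ hμ t ht x
  have hc : 0 < Real.sqrt μ := Real.sqrt_pos.2 hμ
  set L := 1/4 / Real.sqrt μ with hLdef
  have hL0 : 0 ≤ L := by positivity
  set f : ℝ → ℂ := fun ξ => Complex.exp (Complex.I * ((t * omegaWW μ ξ + x * ξ : ℝ) : ℂ))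
    with hfdef
  have hfc : Continuous f := cont_integrand μ t x
  have hIcc : (∫ ξ in Set.Icc (-L) L, f ξ) = ∫ ξ in (-L)..L, f ξ := by
    rw [MeasureTheory.integral_Icc_eq_integral_Ioc,
      ← intervalIntegral.integral_of_le (by linarith : -L ≤ L)]
  have hadj : (∫ ξ in (-L)..(0:ℝ), f ξ) + (∫ ξ in (0:ℝ)..L, f ξ) = ∫ ξ in (-L)..L, f ξ :=
    intervalIntegral.integral_add_adjacent_intervals
      (hfc.intervalIntegrable _ _) (hfc.intervalIntegrable _ _)
  have hneg : (∫ ξ in (-L)..(0:ℝ), f ξ) = ∫ ξ in (0:ℝ)..L, f (-ξ) := by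
    have h := intervalIntegral.integral_comp_neg (a := (0:ℝ)) (b := L) (f := f)
    rw [neg_zero] at h
    exact h.symm
  have heq : ∀ ξ : ℝ, f (-ξ)
      = Complex.exp (Complex.I * ((t * omegaWW μ ξ + (-x) * ξ : ℝ) : ℂ)) := by
    intro ξ
    have heven : omegaWW μ (-ξ) = omegaWW μ ξ := by unfold omegaWW; rw [abs_neg]
    rw [hfdef]
    simp only
    rw [show (t * omegaWW μ (-ξ) + x * (-ξ) : ℝ) = (t * omegaWW μ ξ + (-x) * ξ : ℝ) by
      rw [heven]; ring]
  have hnegval : (∫ ξ in (-L)..(0:ℝ), f ξ)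
      = ∫ ξ in (0:ℝ)..L, Complex.exp (Complex.I * ((t * omegaWW μ ξ + (-x) * ξ : ℝ) : ℂ)) := by
    rw [hneg]
    simp only [heq]
  have hb1 : ‖∫ ξ in (-L)..(0:ℝ), f ξ‖ ≤ 13 * (μ * t) ^ (-(1:ℝ)/3) := by
    rw [hnegval]
    exact half_bound μ t (-x) hμ ht
  have hb2 : ‖∫ ξ in (0:ℝ)..L, f ξ‖ ≤ 13 * (μ * t) ^ (-(1:ℝ)/3) :=
    half_bound μ t x hμ ht
  calc ‖∫ ξ in Set.Icc (-L) L, f ξ‖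
      = ‖(∫ ξ in (-L)..(0:ℝ), f ξ) + (∫ ξ in (0:ℝ)..L, f ξ)‖ := by rw [hIcc, ← hadj]
    _ ≤ ‖∫ ξ in (-L)..(0:ℝ), f ξ‖ + ‖∫ ξ in (0:ℝ)..L, f ξ‖ := norm_add_le _ _
    _ ≤ 13 * (μ * t) ^ (-(1:ℝ)/3) + 13 * (μ * t) ^ (-(1:ℝ)/3) := add_le_add hb1 hb2
    _ = 26 * (μ * t) ^ (-(1:ℝ)/3) := by ring
end
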